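/- arXiv:2109.13655 — 7 statements merged into one kernel-verified Lean document; each statement's English description precedes it below -/
import Mathlib

section
/- Let Γ be the positively oriented circle of center c ∈ ℂ and radius r > 0, and suppose zB − A is invertible for every z on Γ. Define S_k := (1/(2πi)) ∮_Γ z^k (zB − A)^{−1} B V_in dz for k = 0, 1, …, M−1 and S := [S_0, S_1, …, S_{M−1}] ∈ ℂ^{n×LM}. Let d be the number of indices i with |λ_i − c| < r. Then the column space of S equals span{x_i : |λ_i − c| < r} if and only if rank(S) = d. -/
open Matrix Metric Set

lemma keyInt (c : ℂ) (r : ℝ) (hr : 0 < r) (lam : ℂ) (h : ‖lam - c‖ ≠ r) (k : ℕ) :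
    (2 * (Real.pi : ℂ) * Complex.I)⁻¹ * (∮ z in C(c, r), z ^ k * (z - lam)⁻¹) =
      if ‖lam - c‖ < r then lam ^ k else 0 := by
  by_cases hin : ‖lam - c‖ < r
  · rw [if_pos hin]
    have hball : lam ∈ ball c r := by simpa [Complex.dist_eq] using hin
    have hd : DiffContOnCl ℂ (fun z : ℂ => z ^ k) (ball c r) :=
      (differentiable_pow k).diffContOnCl
    have h2 := hd.circleIntegral_sub_inv_smul hball
    have heq : (∮ z in C(c, r), z ^ k * (z - lam)⁻¹) =
        ∮ z in C(c, r), (z - lam)⁻¹ • (z ^ k) := by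
      apply circleIntegral.integral_congr hr.le
      intro z hz
      simp [smul_eq_mul, mul_comm]
    rw [heq, h2, smul_eq_mul, ← mul_assoc, inv_mul_cancel₀, one_mul]
    simp [Real.pi_ne_zero, Complex.I_ne_zero]
  · rw [if_neg hin]
    have hout : ∀ z ∈ closedBall c r, z ≠ lam := by
      intro z hz hzl
      subst hzl
      rcases lt_or_eq_of_le (by simpa [Complex.dist_eq] using hz) with h' | h'
      · exact hin h'
      · exact h h'
    have h0 : (∮ z in C(c, r), z ^ k * (z - lam)⁻¹) = 0 := by
      apply Complex.circleIntegral_eq_zero_of_differentiable_on_off_countable hr.le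
        Set.countable_empty
      · apply ContinuousOn.mul (continuousOn_pow k)
        exact ContinuousOn.inv₀ (by fun_prop) fun z hz => sub_ne_zero.2 (hout z hz)
      · intro z hz
        exact ((differentiableAt_pow k).mul
          ((differentiableAt_id.sub_const lam).inv
            (sub_ne_zero.2 (hout z (ball_subset_closedBall hz.1)))))
    rw [h0, mul_zero]

lemma circleIntegral_finset_sum {ι : Type*} (s : Finset ι) (f : ι → ℂ → ℂ) (c : ℂ) (R : ℝ)
    (hf : ∀ i ∈ s, CircleIntegrable (f i) c R) :
    (∮ z in C(c, R), ∑ i ∈ s, f i z) = ∑ i ∈ s, ∮ z in C(c, R), f i z := by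
  simp only [circleIntegral, Finset.smul_sum]
  rw [intervalIntegral.integral_finset_sum]
  exact fun i hi => (hf i hi).out

/-- Complex moment-based subspace theorem for the generalized
eigenvalue problem `A x = λ B x`: the column space of
`S = [S₀, …, S_{M−1}]`, `S_k = (1/(2πi)) ∮_Γ z^k (zB − A)⁻¹ B V_in dz`,
equals the span of the eigenvectors whose eigenvalues lie inside the circle
`Γ = {z : |z − c| = r}` if and only if `rank S = d`. -/
theorem stmt_0 {n L M : ℕ} (hL : 0 < L) (hM : 0 < M)
    (A B X : Matrix (Fin n) (Fin n) ℂ) (lam : Fin n → ℂ)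
    (hB : IsUnit B) (hX : IsUnit X)
    (hdiag : B⁻¹ * A = X * Matrix.diagonal lam * X⁻¹)
    (Vin : Matrix (Fin n) (Fin L) ℂ)
    (c : ℂ) (r : ℝ) (hr : 0 < r)
    (hreg : ∀ z : ℂ, ‖z - c‖ = r →
      IsUnit (z • B - A))
    (hnot : ∀ i, ‖lam i - c‖ ≠ r)
    (S : Matrix (Fin n) (Fin M × Fin L) ℂ)
    (hS : ∀ (k : Fin M) (i : Fin n) (j : Fin L),
      S i (k, j) = (2 * (Real.pi : ℂ) * Complex.I)⁻¹ *
        ∮ z in C(c, r), z ^ (k : ℕ) * (((z • B - A)⁻¹ * B * Vin) i j)) :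
    Submodule.span ℂ (Set.range Sᵀ) =
      Submodule.span ℂ
        {x : Fin n → ℂ | ∃ i, ‖lam i - c‖ < r ∧ x = fun j => X j i} ↔
    S.rank = Fintype.card {i : Fin n // ‖lam i - c‖ < r} := by
  have hXdet : IsUnit X.det := (Matrix.isUnit_iff_isUnit_det X).1 hX
  have hBdet : IsUnit B.det := (Matrix.isUnit_iff_isUnit_det B).1 hB
  set W : Matrix (Fin n) (Fin L) ℂ := X⁻¹ * Vin with hW
  -- resolvent factorization
  have hfact : ∀ z : ℂ, z • B - A =
      B * X * Matrix.diagonal (fun m => z - lam m) * X⁻¹ := by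
    intro z
    have h1 : Matrix.diagonal (fun m => z - lam m) =
        z • (1 : Matrix (Fin n) (Fin n) ℂ) - Matrix.diagonal lam := by
      ext i j
      by_cases h : i = j <;>
        simp [Matrix.diagonal_apply, Matrix.one_apply, h]
    calc z • B - A
        = B * (z • (1 : Matrix (Fin n) (Fin n) ℂ) - B⁻¹ * A) := by
          rw [Matrix.mul_sub, Matrix.mul_nonsing_inv_cancel_left _ _ hBdet,
            mul_smul_comm, mul_one]
      _ = B * (X * (z • (1 : Matrix (Fin n) (Fin n) ℂ) - Matrix.diagonal lam) * X⁻¹) := by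
          rw [hdiag]
          congr 1
          rw [Matrix.mul_sub, Matrix.sub_mul, mul_smul_comm, mul_one, smul_mul_assoc,
            Matrix.mul_nonsing_inv _ hXdet]
      _ = B * X * Matrix.diagonal (fun m => z - lam m) * X⁻¹ := by
          rw [← h1]
          simp only [Matrix.mul_assoc]
  -- entry formula for the resolvent product, on the circle
  have hentry : ∀ z : ℂ, ‖z - c‖ = r → ∀ i j,
      ((z • B - A)⁻¹ * B * Vin) i j = ∑ m, X i m * ((z - lam m)⁻¹ * W m j) := by
    intro z hz i j
    have hzm : ∀ m, z - lam m ≠ 0 := by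
      intro m hm
      apply hnot m
      rw [show lam m = z from (sub_eq_zero.1 hm).symm]
      exact hz
    have hDinv : (Matrix.diagonal (fun m => z - lam m))⁻¹ =
        Matrix.diagonal (fun m => (z - lam m)⁻¹) := by
      apply Matrix.inv_eq_right_inv
      rw [Matrix.diagonal_mul_diagonal]
      have h3 : (fun m => (z - lam m) * (z - lam m)⁻¹) = fun _ => (1 : ℂ) :=
        funext fun m => mul_inv_cancel₀ (hzm m)
      rw [h3, Matrix.diagonal_one]
    have hinv : (z • B - A)⁻¹ =
        X * (Matrix.diagonal (fun m => (z - lam m)⁻¹) * (X⁻¹ * B⁻¹)) := by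
      rw [hfact z,
        Matrix.mul_inv_rev (B * X * Matrix.diagonal (fun m => z - lam m)) X⁻¹,
        Matrix.mul_inv_rev (B * X) (Matrix.diagonal (fun m => z - lam m)),
        Matrix.mul_inv_rev B X, Matrix.nonsing_inv_nonsing_inv _ hXdet, hDinv]
    have hprod : (z • B - A)⁻¹ * B * Vin =
        X * (Matrix.diagonal (fun m => (z - lam m)⁻¹) * W) := by
      rw [hinv, hW]
      simp only [Matrix.mul_assoc, Matrix.nonsing_inv_mul_cancel_left _ _ hBdet]
    rw [hprod]
    simp [Matrix.mul_apply, Matrix.diagonal_apply, ite_mul, zero_mul, Finset.mul_sum,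
      mul_ite, mul_zero]
  -- entry formula for S via contour integration
  have hSentry : ∀ (k : Fin M) (i : Fin n) (j : Fin L),
      S i (k, j) = ∑ m,
        (if ‖lam m - c‖ < r then X i m * lam m ^ (k : ℕ) * W m j else 0) := by
    intro k i j
    rw [hS k i j]
    have hne : ∀ m, ∀ z ∈ sphere c r, z - lam m ≠ 0 := by
      intro m z hz
      refine sub_ne_zero.2 fun hzl => hnot m ?_
      rw [← hzl]; simpa [Complex.dist_eq] using hz
    have hcong : (∮ z in C(c, r), z ^ (k : ℕ) * (((z • B - A)⁻¹ * B * Vin) i j)) =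
        ∮ z in C(c, r), ∑ m, (X i m * W m j) • (z ^ (k : ℕ) * (z - lam m)⁻¹) := by
      apply circleIntegral.integral_congr hr.le
      intro z hz
      have hz' : ‖z - c‖ = r := by simpa [Complex.dist_eq] using hz
      dsimp only
      rw [hentry z hz' i j, Finset.mul_sum]
      apply Finset.sum_congr rfl
      intro m _
      simp only [smul_eq_mul]; ring
    rw [hcong, circleIntegral_finset_sum]
    · rw [Finset.mul_sum]
      apply Finset.sum_congr rfl
      intro m _
      rw [circleIntegral.integral_smul, smul_eq_mul, ← mul_assoc,
        mul_comm ((2 * (Real.pi : ℂ) * Complex.I)⁻¹) (X i m * W m j), mul_assoc,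
        keyInt c r hr (lam m) (hnot m) (k : ℕ)]
      split <;> ring
    · intro m _
      have : ContinuousOn (fun z : ℂ => (X i m * W m j) • (z ^ (k : ℕ) * (z - lam m)⁻¹))
          (sphere c r) := by
        exact ContinuousOn.const_smul ((continuousOn_pow _).mul
          (ContinuousOn.inv₀ (by fun_prop) (hne m))) (X i m * W m j)
      exact this.circleIntegrable hr.le
  -- the inside-eigenvector family
  set P := {i : Fin n // ‖lam i - c‖ < r}
  set e : P → (Fin n → ℂ) := fun m => fun j => X j (m : Fin n) with he
  have hsetEq : {x : Fin n → ℂ | ∃ i, ‖lam i - c‖ < r ∧ x = fun j => X j i} =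
      Set.range e := by
    ext x
    constructor
    · rintro ⟨i, hi, rfl⟩; exact ⟨⟨i, hi⟩, rfl⟩
    · rintro ⟨⟨i, hi⟩, rfl⟩; exact ⟨i, hi, rfl⟩
  have hli : LinearIndependent ℂ e := by
    have h1 : LinearIndependent ℂ (fun i => Xᵀ i) :=
      Matrix.linearIndependent_cols_iff_isUnit.2 hX
    exact h1.comp (Subtype.val : P → Fin n) Subtype.val_injective
  have hdim : Module.finrank ℂ (Submodule.span ℂ (Set.range e)) = Fintype.card P :=
    finrank_span_eq_card hli
  -- columns of S lie in the span of inside eigenvectors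
  have hcol : ∀ p : Fin M × Fin L, Sᵀ p ∈ Submodule.span ℂ (Set.range e) := by
    rintro ⟨k, j⟩
    have hc : Sᵀ (k, j) = ∑ m : Fin n,
        (if ‖lam m - c‖ < r then lam m ^ (k : ℕ) * W m j else 0) •
          (fun i => X i m) := by
      funext i
      rw [Matrix.transpose_apply, hSentry k i j, Finset.sum_apply]
      apply Finset.sum_congr rfl
      intro m _
      simp only [Pi.smul_apply, smul_eq_mul]
      split <;> ring
    rw [hc]
    apply Submodule.sum_mem
    intro m _
    by_cases hm : ‖lam m - c‖ < r
    · exact Submodule.smul_mem _ _ (Submodule.subset_span ⟨⟨m, hm⟩, rfl⟩)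
    · rw [if_neg hm, zero_smul]; exact Submodule.zero_mem _
  have hle : Submodule.span ℂ (Set.range Sᵀ) ≤ Submodule.span ℂ (Set.range e) := by
    rw [Submodule.span_le]
    rintro _ ⟨p, rfl⟩
    exact hcol p
  rw [hsetEq]
  constructor
  · intro h
    rw [← h] at hdim; exact (Matrix.rank_eq_finrank_span_cols S).trans hdim
  · intro h
    apply Submodule.eq_of_le_of_finrank_eq hle
    rw [hdim, ← h]; exact (Matrix.rank_eq_finrank_span_cols S).symm
end

section
/- Let N ∈ ℕ₊ and let z_1, …, z_N ∈ ℂ be distinct points and ω_1, …, ω_N ∈ ℂ weights satisfying Σ_{j=1}^N ω_j z_j^k = 0 for all k = 0, 1, …, N−2. Then for every λ ∈ ℂ with λ ≠ z_j for all j, and for every k = 0, 1, …, N−1, it holds that Σ_{j=1}^N ω_j z_j^k / (z_j − λ) = λ^k · Σ_{j=1}^N ω_j / (z_j − λ). -/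
/-- If the quadrature points `z₁, …, z_N` are pairwise distinct
and the weights satisfy `∑ⱼ ωⱼ zⱼ^k = 0` for `k = 0, 1, …, N−2`, then for every
`λ` distinct from all `zⱼ` and every `k = 0, 1, …, N−1`,
`∑ⱼ ωⱼ zⱼ^k / (zⱼ − λ) = λ^k ∑ⱼ ωⱼ / (zⱼ − λ)`. -/
theorem stmt_4 {N : ℕ} (hN : 0 < N) (z ω : Fin N → ℂ)
    (hdist : Function.Injective z)
    (hquad : ∀ k : ℕ, k + 2 ≤ N → ∑ j, ω j * z j ^ k = 0)
    (lam : ℂ) (hlam : ∀ j, lam ≠ z j)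
    (k : ℕ) (hk : k + 1 ≤ N) :
    ∑ j, ω j * z j ^ k / (z j - lam) = lam ^ k * ∑ j, ω j / (z j - lam) := by
  have hstep : ∀ j, ω j * z j ^ k / (z j - lam) - lam ^ k * (ω j / (z j - lam))
      = ∑ i ∈ Finset.range k, ω j * z j ^ i * lam ^ (k - 1 - i) := by
    intro j
    have hz : z j - lam ≠ 0 := sub_ne_zero.mpr (Ne.symm (hlam j))
    have hgeom : (∑ i ∈ Finset.range k, z j ^ i * lam ^ (k - 1 - i)) * (z j - lam)
        = z j ^ k - lam ^ k := geom_sum₂_mul (z j) lam k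
    field_simp
    rw [show ω j * (z j ^ k - lam ^ k)
        = ω j * ((∑ i ∈ Finset.range k, z j ^ i * lam ^ (k - 1 - i)) * (z j - lam)) from by
      rw [hgeom]]
    rw [Finset.sum_mul, Finset.mul_sum, Finset.mul_sum]
    exact Finset.sum_congr rfl fun i _ => by ring
  have hdiff : ∑ j, ω j * z j ^ k / (z j - lam) - lam ^ k * ∑ j, ω j / (z j - lam)
      = ∑ i ∈ Finset.range k, (∑ j, ω j * z j ^ i) * lam ^ (k - 1 - i) := by
    rw [Finset.mul_sum, ← Finset.sum_sub_distrib]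
    rw [Finset.sum_congr rfl (fun j _ => hstep j), Finset.sum_comm]
    exact Finset.sum_congr rfl fun i _ => by rw [Finset.sum_mul]
  have hzero : ∑ i ∈ Finset.range k, (∑ j, ω j * z j ^ i) * lam ^ (k - 1 - i) = 0 := by
    refine Finset.sum_eq_zero fun i hi => ?_
    have := Finset.mem_range.mp hi
    rw [hquad i (by omega), zero_mul]
  exact sub_eq_zero.mp (hdiff.trans hzero)
end

section
/- Suppose the quadrature points z_j ∈ ℂ and weights ω_j ∈ ℂ, j = 1, …, N, satisfy Σ_{j=1}^N ω_j z_j^k = 0 for k = 0, 1, …, N−2, and that z_j ≠ σ_i² for all i, j. Define Ŝ_k := Σ_{j=1}^N ω_j z_j^k (z_j I − AᵀA)^{−1} V_in. Then Ŝ_k = Σ_{i=1}^n σ_i^{2k} (Σ_{j=1}^N ω_j/(z_j − σ_i²)) v_i v_iᵀ V_in = (AᵀA)^k Ŝ_0 for every k = 0, 1, …, N−1. -/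
open Matrix

lemma conj_diag_mul {n : ℕ} (W : Matrix (Fin n) (Fin n) ℂ) (hW : Wᵀ * W = 1)
    (d e : Fin n → ℂ) :
    (W * diagonal d * Wᵀ) * (W * diagonal e * Wᵀ)
      = W * diagonal (fun i => d i * e i) * Wᵀ := by
  have h : Wᵀ * (W * diagonal e * Wᵀ) = diagonal e * Wᵀ := by
    rw [← Matrix.mul_assoc, ← Matrix.mul_assoc, hW, Matrix.one_mul]
  rw [Matrix.mul_assoc (W * diagonal d), h, ← Matrix.mul_assoc,
    Matrix.mul_assoc W, Matrix.diagonal_mul_diagonal]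

lemma conj_diag_pow {n : ℕ} (W : Matrix (Fin n) (Fin n) ℂ) (hW : Wᵀ * W = 1)
    (hW' : W * Wᵀ = 1) (d : Fin n → ℂ) (k : ℕ) :
    (W * diagonal d * Wᵀ) ^ k = W * diagonal (fun i => d i ^ k) * Wᵀ := by
  induction k with
  | zero => simp [hW']
  | succ k ih =>
    rw [pow_succ, ih, conj_diag_mul W hW]
    simp only [← pow_succ]

lemma conj_diag_sum {n : ℕ} (W : Matrix (Fin n) (Fin n) ℂ) (d : Fin n → ℂ) :
    W * diagonal d * Wᵀ
      = ∑ i, d i • vecMulVec (fun a => W a i) (fun a => W a i) := by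
  ext a b
  simp only [Matrix.sum_apply, Matrix.smul_apply, vecMulVec_apply, mul_apply,
    diagonal_apply, transpose_apply, smul_eq_mul, mul_ite, mul_zero, ite_mul,
    zero_mul, Finset.sum_ite_eq', Finset.sum_ite_eq, Finset.mem_univ, if_true]
  exact Finset.sum_congr rfl fun c _ => by ring

lemma quad_moment {N : ℕ} (z ω : Fin N → ℂ) (s : ℂ) (hz : ∀ j, z j ≠ s)
    (hquad : ∀ k : ℕ, k + 2 ≤ N → ∑ j, ω j * z j ^ k = 0) :
    ∀ k : ℕ, k + 1 ≤ N →
      ∑ j, ω j * z j ^ k * (z j - s)⁻¹ = s ^ k * ∑ j, ω j * (z j - s)⁻¹ := by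
  intro k
  induction k with
  | zero => simp
  | succ k ih =>
    intro hk
    have h1 : ∑ j, ω j * z j ^ (k + 1) * (z j - s)⁻¹
        = ∑ j, (ω j * z j ^ k + s * (ω j * z j ^ k * (z j - s)⁻¹)) := by
      refine Finset.sum_congr rfl fun j _ => ?_
      have hne : z j - s ≠ 0 := sub_ne_zero.mpr (hz j)
      field_simp
      ring
    rw [h1, Finset.sum_add_distrib, hquad k (by omega), ← Finset.mul_sum,
      ih (by omega), zero_add, pow_succ]
    ring

/-- With quadrature points/weights satisfying
`∑ⱼ ωⱼ zⱼ^k = 0` for `k = 0, …, N−2`, the numerically integrated moment matrices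
`Ŝ_k = ∑ⱼ ωⱼ zⱼ^k (zⱼ I − AᵀA)⁻¹ V_in` satisfy, for `k = 0, …, N−1`,
`Ŝ_k = ∑ᵢ σᵢ^{2k} (∑ⱼ ωⱼ/(zⱼ − σᵢ²)) vᵢvᵢᵀ V_in = (AᵀA)^k Ŝ₀`. -/
theorem stmt_5 {m n L N : ℕ} (hmn : n ≤ m) (hL : 0 < L) (hN : 0 < N)
    (U : Matrix (Fin m) (Fin n) ℝ) (V : Matrix (Fin n) (Fin n) ℝ) (σ : Fin n → ℝ)
    (hU : Uᵀ * U = 1) (hV : Vᵀ * V = 1) (hσ : ∀ i, 0 ≤ σ i)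
    (A : Matrix (Fin m) (Fin n) ℝ) (hA : A = U * Matrix.diagonal σ * Vᵀ)
    (Vin : Matrix (Fin n) (Fin L) ℝ)
    (z ω : Fin N → ℂ)
    (hzσ : ∀ (i : Fin n) (j : Fin N), z j ≠ ((σ i ^ 2 : ℝ) : ℂ))
    (hquad : ∀ k : ℕ, k + 2 ≤ N → ∑ j, ω j * z j ^ k = 0)
    (Shat : ℕ → Matrix (Fin n) (Fin L) ℂ)
    (hShat : ∀ k : ℕ, Shat k = ∑ j, (ω j * z j ^ k) •
      ((z j • (1 : Matrix (Fin n) (Fin n) ℂ) - (Aᵀ * A).map Complex.ofReal)⁻¹ *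
        Vin.map Complex.ofReal))
    (k : ℕ) (hk : k + 1 ≤ N) :
    Shat k = ∑ i, (((σ i : ℂ)) ^ (2 * k) * ∑ j, ω j / (z j - ((σ i ^ 2 : ℝ) : ℂ))) •
        ((Matrix.vecMulVec (fun a => V a i) (fun a => V a i) * Vin).map Complex.ofReal) ∧
      Shat k = ((Aᵀ * A).map Complex.ofReal) ^ k * Shat 0 := by
  set W : Matrix (Fin n) (Fin n) ℂ := V.map Complex.ofReal with hWdef
  set Vin' : Matrix (Fin n) (Fin L) ℂ := Vin.map Complex.ofReal with hVin'
  set P : Fin n → Matrix (Fin n) (Fin n) ℂ :=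
    fun i => vecMulVec (fun a => W a i) (fun a => W a i) with hPdef
  have hWt : Wᵀ = Vᵀ.map Complex.ofReal := by
    ext a b; simp [hWdef]
  have hWo : Wᵀ * W = 1 := by
    have h1 : Wᵀ * W = (Vᵀ * V).map Complex.ofRealHom := by
      rw [Matrix.map_mul]; rfl
    rw [h1, hV, Matrix.map_one _ (by simp) (by simp)]
  have hWo' : W * Wᵀ = 1 := mul_eq_one_comm.mp hWo
  have hcast : ∀ i, ((σ i ^ 2 : ℝ) : ℂ) = (σ i : ℂ) ^ 2 := fun i => by push_cast; ring
  have hAtA : Aᵀ * A = V * Matrix.diagonal (fun i => σ i ^ 2) * Vᵀ := by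
    subst hA
    calc (U * Matrix.diagonal σ * Vᵀ)ᵀ * (U * Matrix.diagonal σ * Vᵀ)
        = V * (Matrix.diagonal σ * ((Uᵀ * U) * (Matrix.diagonal σ * Vᵀ))) := by
          simp only [Matrix.transpose_mul, Matrix.transpose_transpose,
            Matrix.diagonal_transpose, Matrix.mul_assoc]
      _ = V * Matrix.diagonal (fun i => σ i ^ 2) * Vᵀ := by
          rw [hU, Matrix.one_mul, Matrix.mul_assoc V,
            ← Matrix.mul_assoc (Matrix.diagonal σ), Matrix.diagonal_mul_diagonal,
            ← Matrix.mul_assoc]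
          have h : (fun i => σ i * σ i) = fun i => σ i ^ 2 :=
            funext fun i => (pow_two (σ i)).symm
          rw [h, Matrix.mul_assoc]
  have hM : (Aᵀ * A).map Complex.ofReal
      = W * diagonal (fun i => (σ i : ℂ) ^ 2) * Wᵀ := by
    rw [hAtA]
    have h1 : (V * Matrix.diagonal (fun i => σ i ^ 2) * Vᵀ).map Complex.ofRealHom
        = (V.map Complex.ofRealHom) * ((Matrix.diagonal (fun i => σ i ^ 2)).map Complex.ofRealHom)
          * (Vᵀ.map Complex.ofRealHom) := by
      rw [Matrix.map_mul, Matrix.map_mul]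
    have h2 : (Matrix.diagonal (fun i => σ i ^ 2)).map Complex.ofReal
        = diagonal (fun i => (σ i : ℂ) ^ 2) := by
      rw [Matrix.diagonal_map (by simp)]
      exact congrArg diagonal (funext hcast)
    calc (V * Matrix.diagonal (fun i => σ i ^ 2) * Vᵀ).map Complex.ofReal
        = (V.map Complex.ofReal) * ((Matrix.diagonal (fun i => σ i ^ 2)).map Complex.ofReal)
          * (Vᵀ.map Complex.ofReal) := h1
      _ = W * diagonal (fun i => (σ i : ℂ) ^ 2) * Wᵀ := by rw [h2, hWt]
  have hzne : ∀ (i : Fin n) (j : Fin N), z j - (σ i : ℂ) ^ 2 ≠ 0 := by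
    intro i j
    rw [← hcast i]
    exact sub_ne_zero.mpr (hzσ i j)
  have hInv : ∀ j, (z j • (1 : Matrix (Fin n) (Fin n) ℂ) - (Aᵀ * A).map Complex.ofReal)⁻¹
      = W * diagonal (fun i => (z j - (σ i : ℂ) ^ 2)⁻¹) * Wᵀ := by
    intro j
    have hE : z j • (1 : Matrix (Fin n) (Fin n) ℂ) - (Aᵀ * A).map Complex.ofReal
        = W * diagonal (fun i => z j - (σ i : ℂ) ^ 2) * Wᵀ := by
      have hzI : z j • (1 : Matrix (Fin n) (Fin n) ℂ)
          = W * diagonal (fun _ => z j) * Wᵀ := by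
        have hd : diagonal (fun _ : Fin n => z j) = z j • (1 : Matrix (Fin n) (Fin n) ℂ) := by
          ext a b
          by_cases h : a = b <;> simp [Matrix.diagonal_apply, Matrix.one_apply, h]
        rw [hd, Matrix.mul_smul, Matrix.mul_one, Matrix.smul_mul, hWo']
      rw [hM, hzI, ← Matrix.sub_mul, ← Matrix.mul_sub, Matrix.diagonal_sub]
    apply Matrix.inv_eq_right_inv
    rw [hE, conj_diag_mul W hWo]
    have h1 : (fun i => (z j - (σ i : ℂ) ^ 2) * (z j - (σ i : ℂ) ^ 2)⁻¹)
        = fun _ : Fin n => (1 : ℂ) := by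
      funext i
      exact mul_inv_cancel₀ (hzne i j)
    rw [h1, Matrix.diagonal_one, Matrix.mul_one, hWo']
  have hform : ∀ k' : ℕ, Shat k'
      = ∑ i, (∑ j, ω j * z j ^ k' * (z j - (σ i : ℂ) ^ 2)⁻¹) • (P i * Vin') := by
    intro k'
    rw [hShat k']
    have h1 : ∀ j : Fin N, (ω j * z j ^ k') •
        ((z j • (1 : Matrix (Fin n) (Fin n) ℂ) - (Aᵀ * A).map Complex.ofReal)⁻¹ * Vin')
        = ∑ i, (ω j * z j ^ k' * (z j - (σ i : ℂ) ^ 2)⁻¹) • (P i * Vin') := by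
      intro j
      rw [hInv j, conj_diag_sum, Matrix.sum_mul, Finset.smul_sum]
      refine Finset.sum_congr rfl fun i _ => ?_
      rw [Matrix.smul_mul, smul_smul]
    rw [Finset.sum_congr rfl fun j _ => h1 j, Finset.sum_comm]
    exact Finset.sum_congr rfl fun i _ => (Finset.sum_smul).symm
  have hmoment : ∀ i : Fin n, ∑ j, ω j * z j ^ k * (z j - (σ i : ℂ) ^ 2)⁻¹
      = ((σ i : ℂ) ^ 2) ^ k * ∑ j, ω j * (z j - (σ i : ℂ) ^ 2)⁻¹ := by
    intro i
    exact quad_moment z ω ((σ i : ℂ) ^ 2)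
      (fun j => sub_ne_zero.mp (hzne i j)) hquad k hk
  have hPV : ∀ i, ((Matrix.vecMulVec (fun a => V a i) (fun a => V a i) * Vin)).map Complex.ofReal
      = P i * Vin' := by
    intro i
    ext a b
    simp only [Matrix.map_apply, mul_apply, vecMulVec_apply, hPdef, hVin', hWdef]
    push_cast
    ring
  have hfirst : Shat k = ∑ i, (((σ i : ℂ)) ^ (2 * k) * ∑ j, ω j / (z j - ((σ i ^ 2 : ℝ) : ℂ))) •
      ((Matrix.vecMulVec (fun a => V a i) (fun a => V a i) * Vin).map Complex.ofReal) := by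
    rw [hform k]
    refine Finset.sum_congr rfl fun i _ => ?_
    rw [hPV i, hmoment i]
    congr 1
    rw [pow_mul]
    congr 1
    refine Finset.sum_congr rfl fun j _ => ?_
    rw [hcast i, div_eq_mul_inv]
  refine ⟨hfirst, ?_⟩
  -- second part
  have hPdiagonal : ∀ i, P i
      = W * diagonal (fun e => if e = i then (1 : ℂ) else 0) * Wᵀ := by
    intro i
    rw [conj_diag_sum]
    simp [ite_smul, Finset.sum_ite_eq', hPdef]
  have hMkP : ∀ i, ((Aᵀ * A).map Complex.ofReal) ^ k * P i
      = (((σ i : ℂ) ^ 2) ^ k) • P i := by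
    intro i
    rw [hM, conj_diag_pow W hWo hWo', hPdiagonal i, conj_diag_mul W hWo]
    have h1 : (fun e => ((σ e : ℂ) ^ 2) ^ k * (if e = i then (1 : ℂ) else 0))
        = fun e => ((σ i : ℂ) ^ 2) ^ k * (if e = i then (1 : ℂ) else 0) := by
      funext e
      by_cases h : e = i <;> simp [h]
    rw [h1]
    have h2 : diagonal (fun e => ((σ i : ℂ) ^ 2) ^ k * (if e = i then (1 : ℂ) else 0))
        = (((σ i : ℂ) ^ 2) ^ k) • diagonal (fun e => if e = i then (1 : ℂ) else 0) := by
      rw [← Matrix.diagonal_smul]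
      rfl
    rw [h2, Matrix.mul_smul, Matrix.smul_mul]
  rw [hform k, hform 0]
  rw [Matrix.mul_sum]
  refine Finset.sum_congr rfl fun i _ => ?_
  rw [Matrix.mul_smul, ← Matrix.mul_assoc, hMkP i, Matrix.smul_mul, smul_smul,
    hmoment i]
  simp only [pow_zero, mul_one]
  congr 1
  exact mul_comm _ _
end

section
/- Let z_j ∈ ℂ and ω_j ∈ ℂ, j = 1, …, N, satisfy z_j ≠ σ_i² for all i, j, and define the filter function f(σ) := Σ_{j=1}^N ω_j/(z_j − σ²). Define Ŝ_0^{(0)} := V_in, Ŝ_0^{(ν)} := Σ_{j=1}^N ω_j (z_j I − AᵀA)^{−1} Ŝ_0^{(ν−1)} for ν = 1, …, ℓ−1, and Ŝ_k^{(ℓ)} := Σ_{j=1}^N ω_j z_j^k (z_j I − AᵀA)^{−1} Ŝ_0^{(ℓ−1)}. Suppose additionally Σ_{j=1}^N ω_j z_j^k = 0 for k = 0, 1, …, N−2. Then for every k = 0, …, N−1, Ŝ_k^{(ℓ)} = Σ_{i=1}^n σ_i^{2k} (f(σ_i))^ℓ v_i v_iᵀ V_in = V Σ^{2k} (f(Σ))^ℓ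 Vᵀ V_in, where f(Σ) := diag(f(σ_1), …, f(σ_n)). -/
open Matrix

private lemma map_mul_ofReal {p q r : ℕ} (B : Matrix (Fin p) (Fin q) ℝ)
    (C : Matrix (Fin q) (Fin r) ℝ) :
    (B * C).map Complex.ofReal = B.map Complex.ofReal * C.map Complex.ofReal := by
  ext a b
  simp [Matrix.mul_apply, Matrix.map_apply]

private lemma diagonal_sum' {n N : ℕ} (s : Finset (Fin N)) (d : Fin N → Fin n → ℂ) :
    (∑ j ∈ s, Matrix.diagonal (d j)) = Matrix.diagonal (fun i => ∑ j ∈ s, d j i) := by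
  ext a b
  by_cases h : a = b <;> simp [Matrix.diagonal_apply, h, Matrix.sum_apply]

/-- For the iterated quadrature construction
`Ŝ₀⁽⁰⁾ = V_in`, `Ŝ₀⁽ᵛ⁾ = ∑ⱼ ωⱼ (zⱼI − AᵀA)⁻¹ Ŝ₀⁽ᵛ⁻¹⁾`,
`Ŝ_k⁽ˡ⁾ = ∑ⱼ ωⱼ zⱼ^k (zⱼI − AᵀA)⁻¹ Ŝ₀⁽ˡ⁻¹⁾`, under the vanishing-moment
condition `∑ⱼ ωⱼ zⱼ^k = 0` (`k = 0, …, N−2`), one has for `k = 0, …, N−1`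
`Ŝ_k⁽ˡ⁾ = ∑ᵢ σᵢ^{2k} f(σᵢ)^ℓ vᵢvᵢᵀ V_in = V Σ^{2k} f(Σ)^ℓ Vᵀ V_in`,
where `f(σ) = ∑ⱼ ωⱼ/(zⱼ − σ²)`. -/
theorem stmt_6 {m n L N : ℕ} (hmn : n ≤ m) (hL : 0 < L) (hN : 0 < N)
    (ℓ : ℕ) (hℓ : 0 < ℓ)
    (U : Matrix (Fin m) (Fin n) ℝ) (V : Matrix (Fin n) (Fin n) ℝ) (σ : Fin n → ℝ)
    (hU : Uᵀ * U = 1) (hV : Vᵀ * V = 1) (hσ : ∀ i, 0 ≤ σ i)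
    (A : Matrix (Fin m) (Fin n) ℝ) (hA : A = U * Matrix.diagonal σ * Vᵀ)
    (Vin : Matrix (Fin n) (Fin L) ℝ)
    (z ω : Fin N → ℂ)
    (hzσ : ∀ (i : Fin n) (j : Fin N), z j ≠ ((σ i ^ 2 : ℝ) : ℂ))
    (hquad : ∀ k : ℕ, k + 2 ≤ N → ∑ j, ω j * z j ^ k = 0)
    (f : Fin n → ℂ) (hf : ∀ i, f i = ∑ j, ω j / (z j - ((σ i ^ 2 : ℝ) : ℂ)))
    (S0 : ℕ → Matrix (Fin n) (Fin L) ℂ)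
    (hS0zero : S0 0 = Vin.map Complex.ofReal)
    (hS0succ : ∀ ν : ℕ, S0 (ν + 1) = ∑ j, ω j •
      ((z j • (1 : Matrix (Fin n) (Fin n) ℂ) - (Aᵀ * A).map Complex.ofReal)⁻¹ * S0 ν))
    (k : ℕ) (hk : k + 1 ≤ N) :
    (∑ j, (ω j * z j ^ k) •
        ((z j • (1 : Matrix (Fin n) (Fin n) ℂ) - (Aᵀ * A).map Complex.ofReal)⁻¹ *
          S0 (ℓ - 1))) =
      ∑ i, (((σ i : ℂ)) ^ (2 * k) * f i ^ ℓ) •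
        ((Matrix.vecMulVec (fun a => V a i) (fun a => V a i) * Vin).map Complex.ofReal) ∧
    (∑ j, (ω j * z j ^ k) •
        ((z j • (1 : Matrix (Fin n) (Fin n) ℂ) - (Aᵀ * A).map Complex.ofReal)⁻¹ *
          S0 (ℓ - 1))) =
      V.map Complex.ofReal * (Matrix.diagonal fun i => ((σ i : ℝ) : ℂ)) ^ (2 * k) *
        (Matrix.diagonal f) ^ ℓ * (Vᵀ).map Complex.ofReal * Vin.map Complex.ofReal := by
  classical
  set Vc : Matrix (Fin n) (Fin n) ℂ := V.map Complex.ofReal with hVc_def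
  set Wc : Matrix (Fin n) (Fin n) ℂ := (Vᵀ).map Complex.ofReal with hWc_def
  set Vinc : Matrix (Fin n) (Fin L) ℂ := Vin.map Complex.ofReal with hVinc_def
  set M : Matrix (Fin n) (Fin n) ℂ := (Aᵀ * A).map Complex.ofReal with hM_def
  set sq : Fin n → ℂ := fun i => ((σ i ^ 2 : ℝ) : ℂ) with hsq_def
  have hWV : Wc * Vc = 1 := by
    rw [hWc_def, hVc_def, ← map_mul_ofReal, hV,
      Matrix.map_one _ Complex.ofReal_zero Complex.ofReal_one]
  have hVW : Vc * Wc = 1 := mul_eq_one_comm.mp hWV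
  have hAtA : Aᵀ * A = V * Matrix.diagonal (fun i => σ i ^ 2) * Vᵀ := by
    have hUX : ∀ (X : Matrix (Fin n) (Fin n) ℝ), Uᵀ * (U * X) = X := by
      intro X; rw [← Matrix.mul_assoc, hU, Matrix.one_mul]
    subst hA
    simp only [Matrix.transpose_mul, Matrix.transpose_transpose,
      Matrix.diagonal_transpose, Matrix.mul_assoc, hUX]
    rw [← Matrix.mul_assoc (Matrix.diagonal σ), Matrix.diagonal_mul_diagonal]
    simp [pow_two, Matrix.mul_assoc]
  have hMc : M = Vc * Matrix.diagonal sq * Wc := by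
    rw [hM_def, hAtA, map_mul_ofReal, map_mul_ofReal,
      Matrix.diagonal_map Complex.ofReal_zero]
  have hsand : ∀ (D E : Matrix (Fin n) (Fin n) ℂ),
      (Vc * D * Wc) * (Vc * E * Wc) = Vc * (D * E) * Wc := by
    intro D E
    simp only [Matrix.mul_assoc]
    rw [← Matrix.mul_assoc Wc Vc (E * Wc), hWV, Matrix.one_mul]
  have hsand' : ∀ (D E : Matrix (Fin n) (Fin n) ℂ) (X : Matrix (Fin n) (Fin L) ℂ),
      (Vc * D * Wc) * (Vc * E * Wc * X) = Vc * (D * E) * Wc * X := by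
    intro D E X
    simp only [Matrix.mul_assoc]
    rw [← Matrix.mul_assoc Wc Vc (E * (Wc * X)), hWV, Matrix.one_mul]
  have hres : ∀ j, (z j • (1 : Matrix (Fin n) (Fin n) ℂ) - M)⁻¹ =
      Vc * Matrix.diagonal (fun i => (z j - sq i)⁻¹) * Wc := by
    intro j
    have h1 : Vc * Matrix.diagonal (fun _ : Fin n => z j) * Wc
        = z j • (1 : Matrix (Fin n) (Fin n) ℂ) := by
      rw [← Matrix.smul_one_eq_diagonal, Matrix.mul_smul, Matrix.mul_one,
        Matrix.smul_mul, hVW]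
    have hzI : z j • (1 : Matrix (Fin n) (Fin n) ℂ) - M =
        Vc * Matrix.diagonal (fun i => z j - sq i) * Wc := by
      rw [← Matrix.diagonal_sub, Matrix.mul_sub, Matrix.sub_mul, h1, ← hMc]
    apply Matrix.inv_eq_right_inv
    rw [hzI, hsand, Matrix.diagonal_mul_diagonal]
    have h2 : (fun i => (z j - sq i) * (z j - sq i)⁻¹) = fun _ : Fin n => (1 : ℂ) := by
      funext i
      exact mul_inv_cancel₀ (sub_ne_zero.mpr (hzσ i j))
    rw [h2, Matrix.diagonal_one, Matrix.mul_one, hVW]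
  have hsum : ∀ (c : Fin N → ℂ),
      (∑ j, c j • (Vc * Matrix.diagonal (fun i => (z j - sq i)⁻¹) * Wc)) =
        Vc * Matrix.diagonal (fun i => ∑ j, c j * (z j - sq i)⁻¹) * Wc := by
    intro c
    have h2 : ∀ j, c j • (Vc * Matrix.diagonal (fun i => (z j - sq i)⁻¹) * Wc) =
        Vc * Matrix.diagonal (fun i => c j * (z j - sq i)⁻¹) * Wc := by
      intro j
      rw [show (fun i => c j * (z j - sq i)⁻¹) = c j • (fun i => (z j - sq i)⁻¹) from rfl,
        Matrix.diagonal_smul, Matrix.mul_smul, Matrix.smul_mul]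
    rw [Finset.sum_congr rfl fun j _ => h2 j, ← Finset.sum_mul, ← Finset.mul_sum,
      diagonal_sum']
  have hf' : ∀ i, f i = ∑ j, ω j * (z j - sq i)⁻¹ := by
    intro i; rw [hf]
    exact Finset.sum_congr rfl fun j _ => div_eq_mul_inv _ _
  have hSnu : ∀ ν, S0 ν = Vc * (Matrix.diagonal f) ^ ν * Wc * Vinc := by
    intro ν
    induction ν with
    | zero => rw [hS0zero, pow_zero, Matrix.mul_one, hVW, Matrix.one_mul]
    | succ ν ih =>
      have e1 : ∀ j : Fin N, ω j • ((z j • (1 : Matrix (Fin n) (Fin n) ℂ) - M)⁻¹ * S0 ν)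
          = (ω j • (Vc * Matrix.diagonal (fun i => (z j - sq i)⁻¹) * Wc)) *
            (Vc * Matrix.diagonal f ^ ν * Wc * Vinc) := by
        intro j; rw [hres j, ih, Matrix.smul_mul]
      rw [hS0succ ν, Finset.sum_congr rfl fun j _ => e1 j, ← Matrix.sum_mul, hsum ω]
      have h3 : (fun i => ∑ j, ω j * (z j - sq i)⁻¹) = f := by
        funext i; rw [← hf' i]
      rw [h3, hsand', ← pow_succ']
  have hpf : ∀ (i : Fin n), ∑ j, (ω j * z j ^ k) * (z j - sq i)⁻¹ = sq i ^ k * f i := by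
    intro i
    have hne : ∀ j, z j - sq i ≠ 0 := fun j => sub_ne_zero.mpr (hzσ i j)
    have key : ∀ j : Fin N, (ω j * z j ^ k) * (z j - sq i)⁻¹ =
        ω j * (∑ t ∈ Finset.range k, z j ^ t * sq i ^ (k - 1 - t)) +
          sq i ^ k * (ω j * (z j - sq i)⁻¹) := by
      intro j
      have hg : z j ^ k = (∑ t ∈ Finset.range k, z j ^ t * sq i ^ (k - 1 - t)) *
          (z j - sq i) + sq i ^ k := by
        rw [geom_sum₂_mul]; ring
      rw [hg]
      field_simp [hne j]
    rw [Finset.sum_congr rfl fun j _ => key j, Finset.sum_add_distrib]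
    have h0 : ∑ j, ω j * ∑ t ∈ Finset.range k, z j ^ t * sq i ^ (k - 1 - t) = 0 := by
      have hpush : ∀ j : Fin N, ω j * ∑ t ∈ Finset.range k, z j ^ t * sq i ^ (k - 1 - t)
          = ∑ t ∈ Finset.range k, ω j * z j ^ t * sq i ^ (k - 1 - t) := by
        intro j
        rw [Finset.mul_sum]
        exact Finset.sum_congr rfl fun t _ => by ring
      rw [Finset.sum_congr rfl fun j _ => hpush j, Finset.sum_comm]
      apply Finset.sum_eq_zero
      intro t ht
      have ht2 : t + 2 ≤ N := by
        have := Finset.mem_range.mp ht; omega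
      calc ∑ j, ω j * z j ^ t * sq i ^ (k - 1 - t)
          = (∑ j, ω j * z j ^ t) * sq i ^ (k - 1 - t) := by rw [Finset.sum_mul]
        _ = 0 := by rw [hquad t ht2, zero_mul]
    rw [h0, zero_add, ← Finset.mul_sum, ← hf' i]
  have hmain : (∑ j, (ω j * z j ^ k) •
      ((z j • (1 : Matrix (Fin n) (Fin n) ℂ) - M)⁻¹ * S0 (ℓ - 1)))
      = Vc * Matrix.diagonal (fun i => sq i ^ k * f i ^ ℓ) * Wc * Vinc := by
    have e1 : ∀ j : Fin N, (ω j * z j ^ k) •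
        ((z j • (1 : Matrix (Fin n) (Fin n) ℂ) - M)⁻¹ * S0 (ℓ - 1))
        = ((ω j * z j ^ k) • (Vc * Matrix.diagonal (fun i => (z j - sq i)⁻¹) * Wc)) *
          (Vc * Matrix.diagonal f ^ (ℓ - 1) * Wc * Vinc) := by
      intro j; rw [hres j, hSnu (ℓ - 1), Matrix.smul_mul]
    rw [Finset.sum_congr rfl fun j _ => e1 j, ← Matrix.sum_mul,
      hsum (fun j => ω j * z j ^ k)]
    have h4 : (fun i => ∑ j, (ω j * z j ^ k) * (z j - sq i)⁻¹)
        = fun i => sq i ^ k * f i := by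
      funext i; exact hpf i
    rw [h4, hsand', Matrix.diagonal_pow, Matrix.diagonal_mul_diagonal]
    have h5 : (fun i => (sq i ^ k * f i) * (f ^ (ℓ - 1)) i)
        = fun i => sq i ^ k * f i ^ ℓ := by
      funext i
      have : f i * f i ^ (ℓ - 1) = f i ^ ℓ := by
        rw [← pow_succ', Nat.sub_add_cancel hℓ]
      rw [Pi.pow_apply, mul_assoc, this]
    rw [h5]
  constructor
  · rw [hmain]
    ext a b
    simp only [Matrix.mul_apply, Matrix.diagonal_apply, Matrix.sum_apply,
      Matrix.smul_apply, Matrix.map_apply, Matrix.vecMulVec_apply, smul_eq_mul,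
      Finset.sum_mul, Finset.mul_sum, hVc_def, hWc_def, hVinc_def, hsq_def,
      Matrix.transpose_apply]
    push_cast
    simp only [mul_ite, mul_zero, ite_mul, zero_mul, Finset.sum_ite_eq,
      Finset.sum_ite_eq', Finset.mem_univ, if_true, Finset.mul_sum]
    rw [Finset.sum_comm]
    refine Finset.sum_congr rfl fun i _ => Finset.sum_congr rfl fun x _ => ?_
    push_cast
    ring
  · rw [hmain, Matrix.diagonal_pow, Matrix.diagonal_pow]
    conv_rhs => rw [Matrix.mul_assoc Vc, Matrix.diagonal_mul_diagonal]
    have h6 : (fun i => sq i ^ k * f i ^ ℓ)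
        = fun i => ((fun i => ((σ i : ℝ) : ℂ)) ^ (2 * k)) i * (f ^ ℓ) i := by
      funext i
      simp only [Pi.pow_apply, hsq_def]
      rw [pow_mul]
      push_cast
      ring
    rw [h6]
end

section
/- Under the assumptions that z_j ≠ σ_i² for all i, j and Σ_{j=1}^N ω_j z_j^k = 0 for k = 0, 1, …, N−2, define Ŝ^{(ℓ)} := [Ŝ_0^{(ℓ)}, Ŝ_1^{(ℓ)}, …, Ŝ_{M−1}^{(ℓ)}] with the matrices Ŝ_k^{(ℓ)} as in the iterated quadrature construction, and suppose M ≤ N. Then Ŝ^{(ℓ)} = F^ℓ K, where F := V f(Σ) Vᵀ with f(Σ) := diag(f(σ_1), …, f(σ_n)), f(σ) := Σ_{j=1}^N ω_j/(z_j − σ²), and K := [V_in, (AᵀA)V_in, …, (AᵀA)^{M−1} V_in]. -/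
open Matrix

namespace Stmt7Aux
variable {n : ℕ}

lemma diag_sum {N : ℕ} (g : Fin N → Fin n → ℂ) :
    ∑ j, Matrix.diagonal (g j) = Matrix.diagonal (fun i => ∑ j, g j i) := by
  ext i i'
  by_cases h : i = i' <;> simp [Matrix.sum_apply, Matrix.diagonal_apply, h]

lemma conj_mul (W : Matrix (Fin n) (Fin n) ℂ) (hWtW : Wᵀ * W = 1) (a b : Fin n → ℂ) :
    (W * Matrix.diagonal a * Wᵀ) * (W * Matrix.diagonal b * Wᵀ)
      = W * Matrix.diagonal (fun i => a i * b i) * Wᵀ := by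
  calc (W * Matrix.diagonal a * Wᵀ) * (W * Matrix.diagonal b * Wᵀ)
      = W * Matrix.diagonal a * (Wᵀ * W) * (Matrix.diagonal b * Wᵀ) := by
        simp only [Matrix.mul_assoc]
    _ = W * Matrix.diagonal a * Matrix.diagonal b * Wᵀ := by
        rw [hWtW, Matrix.mul_one, ← Matrix.mul_assoc]
    _ = _ := by rw [Matrix.mul_assoc W, Matrix.diagonal_mul_diagonal]

lemma conj_pow (W : Matrix (Fin n) (Fin n) ℂ) (hWtW : Wᵀ * W = 1) (hWWt : W * Wᵀ = 1)
    (a : Fin n → ℂ) (k : ℕ) :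
    (W * Matrix.diagonal a * Wᵀ) ^ k = W * Matrix.diagonal (fun i => a i ^ k) * Wᵀ := by
  induction k with
  | zero => simp [hWWt]
  | succ k ih =>
      rw [pow_succ, ih, conj_mul W hWtW]
      simp [pow_succ]

lemma conj_sum (W : Matrix (Fin n) (Fin n) ℂ) {N : ℕ} (c : Fin N → ℂ) (r : Fin N → Fin n → ℂ) :
    ∑ j, c j • (W * Matrix.diagonal (r j) * Wᵀ)
      = W * Matrix.diagonal (fun i => ∑ j, c j * r j i) * Wᵀ := by
  have h1 : ∀ j, c j • (W * Matrix.diagonal (r j) * Wᵀ)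
      = W * Matrix.diagonal (fun i => c j * r j i) * Wᵀ := by
    intro j
    rw [← Matrix.smul_mul, ← Matrix.mul_smul, ← Matrix.diagonal_smul]
    rfl
  rw [Finset.sum_congr rfl (fun j _ => h1 j), ← Finset.sum_mul, ← Finset.mul_sum,
    diag_sum]

lemma key {N : ℕ} (z ω : Fin N → ℂ) (s : ℂ) (hzs : ∀ j, z j ≠ s)
    (hquad : ∀ k : ℕ, k + 2 ≤ N → ∑ j, ω j * z j ^ k = 0)
    (k : ℕ) (hk : k + 1 ≤ N) :
    ∑ j, ω j * z j ^ k * (z j - s)⁻¹ = s ^ k * ∑ j, ω j * (z j - s)⁻¹ := by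
  have h1 : ∀ j : Fin N, ω j * z j ^ k * (z j - s)⁻¹
      = ω j * (∑ i ∈ Finset.range k, z j ^ i * s ^ (k - 1 - i)) + s ^ k * (ω j * (z j - s)⁻¹) := by
    intro j
    have hne : z j - s ≠ 0 := sub_ne_zero.mpr (hzs j)
    have hg : z j ^ k = (∑ i ∈ Finset.range k, z j ^ i * s ^ (k - 1 - i)) * (z j - s) + s ^ k := by
      linear_combination -geom_sum₂_mul (z j) s k
    calc ω j * z j ^ k * (z j - s)⁻¹
        = ω j * ((∑ i ∈ Finset.range k, z j ^ i * s ^ (k - 1 - i)) * (z j - s) + s ^ k) * (z j - s)⁻¹ := by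
          rw [← hg]
      _ = ω j * (∑ i ∈ Finset.range k, z j ^ i * s ^ (k - 1 - i)) * ((z j - s) * (z j - s)⁻¹)
            + s ^ k * (ω j * (z j - s)⁻¹) := by ring
      _ = _ := by rw [mul_inv_cancel₀ hne, mul_one]
  rw [Finset.sum_congr rfl (fun j _ => h1 j), Finset.sum_add_distrib, ← Finset.mul_sum]
  have h2 : ∑ j, ω j * (∑ i ∈ Finset.range k, z j ^ i * s ^ (k - 1 - i)) = 0 := by
    simp only [Finset.mul_sum]
    rw [Finset.sum_comm]
    apply Finset.sum_eq_zero
    intro i hi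
    have hi' : i + 2 ≤ N := by have := Finset.mem_range.mp hi; omega
    have : ∑ j, ω j * (z j ^ i * s ^ (k - 1 - i)) = (∑ j, ω j * z j ^ i) * s ^ (k - 1 - i) := by
      rw [Finset.sum_mul]; simp [mul_assoc]
    rw [this, hquad i hi', zero_mul]
  rw [h2, zero_add]


lemma map_mul' {p q r : ℕ} (P : Matrix (Fin p) (Fin q) ℝ) (Q : Matrix (Fin q) (Fin r) ℝ) :
    (P * Q).map Complex.ofReal = P.map Complex.ofReal * Q.map Complex.ofReal :=
  Matrix.map_mul (f := Complex.ofRealHom)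

lemma map_one' {p : ℕ} :
    (1 : Matrix (Fin p) (Fin p) ℝ).map Complex.ofReal = 1 :=
  Matrix.map_one _ Complex.ofReal_zero Complex.ofReal_one

end Stmt7Aux

/-- Under the vanishing-moment condition on the quadrature rule,
the iterated complex-moment matrix `Ŝ⁽ˡ⁾ = [Ŝ₀⁽ˡ⁾, …, Ŝ_{M−1}⁽ˡ⁾]` (with `M ≤ N`)
factors as `Ŝ⁽ˡ⁾ = Fˡ K`, where `F = V f(Σ) Vᵀ`, `f(σ) = ∑ⱼ ωⱼ/(zⱼ − σ²)`, and
`K = [V_in, (AᵀA)V_in, …, (AᵀA)^{M−1} V_in]`. -/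
theorem stmt_7 {m n L M N : ℕ} (hmn : n ≤ m) (hL : 0 < L) (hM : 0 < M) (hN : 0 < N)
    (hMN : M ≤ N) (ℓ : ℕ) (hℓ : 0 < ℓ)
    (U : Matrix (Fin m) (Fin n) ℝ) (V : Matrix (Fin n) (Fin n) ℝ) (σ : Fin n → ℝ)
    (hU : Uᵀ * U = 1) (hV : Vᵀ * V = 1) (hσ : ∀ i, 0 ≤ σ i)
    (A : Matrix (Fin m) (Fin n) ℝ) (hA : A = U * Matrix.diagonal σ * Vᵀ)
    (Vin : Matrix (Fin n) (Fin L) ℝ)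
    (z ω : Fin N → ℂ)
    (hzσ : ∀ (i : Fin n) (j : Fin N), z j ≠ ((σ i ^ 2 : ℝ) : ℂ))
    (hquad : ∀ k : ℕ, k + 2 ≤ N → ∑ j, ω j * z j ^ k = 0)
    (f : Fin n → ℂ) (hf : ∀ i, f i = ∑ j, ω j / (z j - ((σ i ^ 2 : ℝ) : ℂ)))
    (S0 : ℕ → Matrix (Fin n) (Fin L) ℂ)
    (hS0zero : S0 0 = Vin.map Complex.ofReal)
    (hS0succ : ∀ ν : ℕ, S0 (ν + 1) = ∑ j, ω j •
      ((z j • (1 : Matrix (Fin n) (Fin n) ℂ) - (Aᵀ * A).map Complex.ofReal)⁻¹ * S0 ν))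
    (S : Matrix (Fin n) (Fin M × Fin L) ℂ)
    (hS : ∀ (k : Fin M) (i : Fin n) (j : Fin L),
      S i (k, j) = (∑ j', (ω j' * z j' ^ (k : ℕ)) •
        ((z j' • (1 : Matrix (Fin n) (Fin n) ℂ) - (Aᵀ * A).map Complex.ofReal)⁻¹ *
          S0 (ℓ - 1))) i j)
    (F : Matrix (Fin n) (Fin n) ℂ)
    (hF : F = V.map Complex.ofReal * Matrix.diagonal f * (Vᵀ).map Complex.ofReal)
    (K : Matrix (Fin n) (Fin M × Fin L) ℂ)
    (hK : ∀ (k : Fin M) (i : Fin n) (j : Fin L),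
      K i (k, j) = ((((Aᵀ * A).map Complex.ofReal) ^ (k : ℕ)) *
        Vin.map Complex.ofReal) i j) :
    S = F ^ ℓ * K := by
  obtain ⟨ℓ', rfl⟩ : ∃ ℓ'', ℓ = ℓ'' + 1 := ⟨ℓ - 1, by omega⟩
  -- abbreviations
  set W : Matrix (Fin n) (Fin n) ℂ := V.map Complex.ofReal with hWdef
  set s : Fin n → ℂ := fun i => ((σ i ^ 2 : ℝ) : ℂ) with hsdef
  set B : Matrix (Fin n) (Fin n) ℂ := (Aᵀ * A).map Complex.ofReal with hBdef
  set VinC : Matrix (Fin n) (Fin L) ℂ := Vin.map Complex.ofReal with hVinC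
  have hWtW : Wᵀ * W = 1 := by
    calc Wᵀ * W = (Vᵀ).map Complex.ofReal * V.map Complex.ofReal := by
          rw [hWdef, Matrix.transpose_map]
      _ = (Vᵀ * V).map Complex.ofReal := (Stmt7Aux.map_mul' _ _).symm
      _ = 1 := by rw [hV, Stmt7Aux.map_one']
  have hWWt : W * Wᵀ = 1 := mul_eq_one_comm.mp hWtW
  -- B = W diag(s) Wᵀ
  have hAtA : Aᵀ * A = V * Matrix.diagonal (fun i => σ i ^ 2) * Vᵀ := by
    have hDD : Matrix.diagonal σ * Matrix.diagonal σ
        = Matrix.diagonal (fun i => σ i ^ 2) := by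
      ext i i'
      by_cases h : i = i' <;> simp [Matrix.diagonal_apply, h, sq, Matrix.mul_apply]
    rw [hA]
    rw [Matrix.transpose_mul, Matrix.transpose_mul, Matrix.transpose_transpose,
      Matrix.diagonal_transpose]
    calc V * (Matrix.diagonal σ * Uᵀ) * (U * Matrix.diagonal σ * Vᵀ)
        = V * (Matrix.diagonal σ * ((Uᵀ * U) * (Matrix.diagonal σ * Vᵀ))) := by
          simp only [Matrix.mul_assoc]
      _ = V * (Matrix.diagonal σ * (Matrix.diagonal σ * Vᵀ)) := by
          rw [hU, Matrix.one_mul]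
      _ = V * Matrix.diagonal (fun i => σ i ^ 2) * Vᵀ := by
          rw [← Matrix.mul_assoc (Matrix.diagonal σ), hDD, ← Matrix.mul_assoc]
  have hB : B = W * Matrix.diagonal s * Wᵀ := by
    rw [hBdef, hAtA, Stmt7Aux.map_mul', Stmt7Aux.map_mul',
      Matrix.transpose_map, Matrix.diagonal_map Complex.ofReal_zero]
  -- resolvent
  have hres : ∀ j : Fin N,
      (z j • (1 : Matrix (Fin n) (Fin n) ℂ) - B)⁻¹
        = W * Matrix.diagonal (fun i => (z j - s i)⁻¹) * Wᵀ := by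
    intro j
    have h1 : z j • (1 : Matrix (Fin n) (Fin n) ℂ) - B
        = W * Matrix.diagonal (fun i => z j - s i) * Wᵀ := by
      have h2 : z j • (1 : Matrix (Fin n) (Fin n) ℂ)
          = W * Matrix.diagonal (fun _ => z j) * Wᵀ := by
        rw [← Matrix.smul_one_eq_diagonal, Matrix.mul_smul, Matrix.mul_one,
          Matrix.smul_mul, hWWt]
      rw [h2, hB, ← Matrix.sub_mul, ← Matrix.mul_sub, ← Matrix.diagonal_sub]
    rw [h1]
    apply Matrix.inv_eq_right_inv
    rw [Stmt7Aux.conj_mul W hWtW]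
    have h3 : (fun i => (z j - s i) * (z j - s i)⁻¹) = fun _ : Fin n => (1 : ℂ) := by
      funext i
      exact mul_inv_cancel₀ (sub_ne_zero.mpr (hzσ i j))
    rw [h3, Matrix.diagonal_one, Matrix.mul_one, hWWt]
  have hF' : F = W * Matrix.diagonal f * Wᵀ := by
    rw [hF, Matrix.transpose_map]
  have hfs : ∀ i, f i = ∑ j, ω j * (z j - s i)⁻¹ := by
    intro i
    rw [hf i]
    simp only [div_eq_mul_inv]
    rfl
  -- S0 ν = F^ν VinC
  have hS0' : ∀ ν : ℕ, S0 ν = F ^ ν * VinC := by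
    intro ν
    induction ν with
    | zero => simpa using hS0zero
    | succ ν ih =>
        rw [hS0succ, ih]
        have hpull : ∑ j, ω j •
            ((z j • (1 : Matrix (Fin n) (Fin n) ℂ) - B)⁻¹ * (F ^ ν * VinC))
            = (∑ j, ω j • (z j • (1 : Matrix (Fin n) (Fin n) ℂ) - B)⁻¹) * (F ^ ν * VinC) := by
          rw [Matrix.sum_mul]
          simp only [Matrix.smul_mul]
        rw [hpull, Finset.sum_congr rfl (fun j _ => by rw [hres j]),
          Stmt7Aux.conj_sum W ω (fun j i => (z j - s i)⁻¹)]
        have : (fun i => ∑ j, ω j * (z j - s i)⁻¹) = f := by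
          funext i; rw [← hfs i]
        rw [this, ← hF', ← Matrix.mul_assoc, ← pow_succ']
  -- main computation
  have hmain : ∀ k : Fin M,
      (∑ j', (ω j' * z j' ^ (k : ℕ)) •
        ((z j' • (1 : Matrix (Fin n) (Fin n) ℂ) - B)⁻¹ * S0 (ℓ' + 1 - 1)))
      = F ^ (ℓ' + 1) * (B ^ (k : ℕ) * VinC) := by
    intro k
    have hk1 : (k : ℕ) + 1 ≤ N := le_trans (Nat.succ_le_of_lt k.isLt) hMN
    have hS0l : S0 (ℓ' + 1 - 1) = F ^ ℓ' * VinC := by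
      rw [Nat.add_sub_cancel, hS0' ℓ']
    have hpull : ∑ j', (ω j' * z j' ^ (k : ℕ)) •
        ((z j' • (1 : Matrix (Fin n) (Fin n) ℂ) - B)⁻¹ * S0 (ℓ' + 1 - 1))
        = (∑ j', (ω j' * z j' ^ (k : ℕ)) •
            (z j' • (1 : Matrix (Fin n) (Fin n) ℂ) - B)⁻¹) * (F ^ ℓ' * VinC) := by
      rw [hS0l, Matrix.sum_mul]
      simp only [Matrix.smul_mul]
    rw [hpull, Finset.sum_congr rfl (fun j _ => by rw [hres j]),
      Stmt7Aux.conj_sum W (fun j => ω j * z j ^ (k : ℕ)) (fun j i => (z j - s i)⁻¹)]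
    have hdiag : (fun i => ∑ j, (ω j * z j ^ (k : ℕ)) * (z j - s i)⁻¹)
        = fun i => s i ^ (k : ℕ) * f i := by
      funext i
      rw [hfs i]
      exact Stmt7Aux.key z ω (s i) (fun j => hzσ i j) hquad (k : ℕ) hk1
    rw [hdiag, hF', hB, Stmt7Aux.conj_pow W hWtW hWWt f ℓ',
      Stmt7Aux.conj_pow W hWtW hWWt f (ℓ' + 1), Stmt7Aux.conj_pow W hWtW hWWt s (k : ℕ)]
    have hfun : (fun i => s i ^ (k : ℕ) * f i * f i ^ ℓ')
        = (fun i => f i ^ (ℓ' + 1) * s i ^ (k : ℕ)) := by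
      funext i; ring
    rw [← Matrix.mul_assoc, Stmt7Aux.conj_mul W hWtW, hfun,
      ← Matrix.mul_assoc, Stmt7Aux.conj_mul W hWtW]
  -- conclude
  ext i p
  obtain ⟨k, j⟩ := p
  rw [hS k i j]
  have hK' : (F ^ (ℓ' + 1) * K) i (k, j)
      = (F ^ (ℓ' + 1) * (B ^ (k : ℕ) * VinC)) i j := by
    rw [Matrix.mul_apply, Matrix.mul_apply]
    exact Finset.sum_congr rfl (fun t _ => by rw [hK k t j])
  rw [hK', hmain k]
end

section
/- Assume σ_1, …, σ_n > 0 and let φ_1, …, φ_n be nonzero reals with |φ_1| ≥ |φ_2| ≥ … ≥ |φ_n|, assigned so that F v_i = φ_i v_i where F := V diag(φ_1, …, φ_n) Vᵀ. Let p ≤ n, let K ∈ ℝ^{n×p}, let P := Σ_{i=1}^{p} v_i v_iᵀ, and assume rank(PK) = p. Fix i ≤ p and let s_i be the unique vector in the column space of K with P s_i = v_i; set β_i := ‖v_i − s_i‖₂ and α_i := max_{j ≥ p+1} σ_j/σ_i. Let 𝒫_U be the orthogonal projection of ℝ^m onto the column space of A F^ℓ K. Then ‖(I − 𝒫_U) u_i‖₂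 ≤ α_i β_i |φ_{p+1}/φ_i|^ℓ. -/
open Matrix

/-- Euclidean 2-norm of a vector in `ℝᵏ`. -/
noncomputable def enorm₂ {k : ℕ} (x : Fin k → ℝ) : ℝ := Real.sqrt (∑ a, x a ^ 2)

lemma enorm_mono {k : ℕ} {x y : Fin k → ℝ} (h : ∀ a, x a ^ 2 ≤ y a ^ 2) :
    enorm₂ x ≤ enorm₂ y :=
  Real.sqrt_le_sqrt (Finset.sum_le_sum fun a _ => h a)

lemma enorm_smul' {k : ℕ} (t : ℝ) (x : Fin k → ℝ) :
    enorm₂ (fun a => t * x a) = |t| * enorm₂ x := by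
  unfold enorm₂
  simp_rw [mul_pow, ← Finset.mul_sum]
  rw [Real.sqrt_mul (sq_nonneg t), Real.sqrt_sq_eq_abs]

lemma enorm_le_mul {k : ℕ} {C : ℝ} (hC : 0 ≤ C) {x y : Fin k → ℝ}
    (h : ∀ a, |x a| ≤ C * |y a|) : enorm₂ x ≤ C * enorm₂ y := by
  have h2 := enorm_mono (x := x) (y := fun a => C * y a) (fun a => by
    have h1 := h a
    show x a ^ 2 ≤ (C * y a) ^ 2
    calc x a ^ 2 = |x a| ^ 2 := (sq_abs _).symm
      _ ≤ (C * |y a|) ^ 2 := pow_le_pow_left₀ (abs_nonneg (x a)) h1 2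
      _ = C ^ 2 * |y a| ^ 2 := by ring
      _ = C ^ 2 * y a ^ 2 := by rw [sq_abs]
      _ = (C * y a) ^ 2 := by ring)
  rwa [enorm_smul', abs_of_nonneg hC] at h2

lemma enorm_pythag {k : ℕ} (x y : Fin k → ℝ) (h : x ⬝ᵥ y = 0) :
    enorm₂ x ≤ enorm₂ (fun a => x a + y a) := by
  apply Real.sqrt_le_sqrt
  have h1 : ∀ a ∈ Finset.univ, (x a + y a) ^ 2 = x a ^ 2 + (2 * (x a * y a) + y a ^ 2) :=
    fun a _ => by ring
  rw [Finset.sum_congr rfl h1, Finset.sum_add_distrib, Finset.sum_add_distrib, ← Finset.mul_sum]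
  have h2 : ∑ a, x a * y a = 0 := h
  rw [h2]
  have h3 := Finset.sum_nonneg (fun a (_ : a ∈ (Finset.univ : Finset (Fin k))) => sq_nonneg (y a))
  linarith

lemma enorm_mulVec {k l : ℕ} (M : Matrix (Fin k) (Fin l) ℝ) (hM : Mᵀ * M = 1)
    (d : Fin l → ℝ) : enorm₂ (M.mulVec d) = enorm₂ d := by
  unfold enorm₂
  congr 1
  have h1 : ∑ a, (M.mulVec d) a ^ 2 = (M.mulVec d) ⬝ᵥ (M.mulVec d) := by
    simp [dotProduct, sq]
  have h2 : ∑ a, d a ^ 2 = d ⬝ᵥ d := by simp [dotProduct, sq]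
  rw [h1, h2, dotProduct_mulVec, ← mulVec_transpose, mulVec_mulVec, hM, one_mulVec]


/-- Error bound for the left singular vectors: with
`F = V diag(φ) Vᵀ`, `|φ₁| ≥ … ≥ |φₙ|`, `rank(PK) = p`, `sᵢ` the unique vector of
the column space of `K` with `P sᵢ = vᵢ`, `βᵢ = ‖vᵢ − sᵢ‖₂`,
`αᵢ = max_{j ≥ p+1} σⱼ/σᵢ`, and `𝒫_U` the orthogonal projection onto the column
space of `A Fˡ K`, one has `‖(I − 𝒫_U) uᵢ‖₂ ≤ αᵢ βᵢ |φ_{p+1}/φᵢ|ˡ`. -/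
theorem stmt_9 {m n : ℕ} (hmn : n ≤ m)
    (U : Matrix (Fin m) (Fin n) ℝ) (V : Matrix (Fin n) (Fin n) ℝ) (σ : Fin n → ℝ)
    (hU : Uᵀ * U = 1) (hV : Vᵀ * V = 1) (hσ : ∀ i, 0 < σ i)
    (A : Matrix (Fin m) (Fin n) ℝ) (hA : A = U * Matrix.diagonal σ * Vᵀ)
    (φ : Fin n → ℝ) (hφ0 : ∀ i, φ i ≠ 0)
    (hφmono : ∀ i j : Fin n, i ≤ j → |φ j| ≤ |φ i|)
    (F : Matrix (Fin n) (Fin n) ℝ) (hF : F = V * Matrix.diagonal φ * Vᵀ)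
    (ℓ : ℕ) (hℓ : 0 < ℓ)
    (p : ℕ) (hp : p < n)
    (K : Matrix (Fin n) (Fin p) ℝ)
    (P : Matrix (Fin n) (Fin n) ℝ)
    (hP : P = ∑ i ∈ Finset.univ.filter fun i : Fin n => (i : ℕ) < p,
      Matrix.vecMulVec (fun a => V a i) (fun a => V a i))
    (hrank : (P * K).rank = p)
    (i : Fin n) (hi : (i : ℕ) < p)
    (s : Fin n → ℝ)
    (hsmem : s ∈ Submodule.span ℝ (Set.range Kᵀ))
    (hsproj : P.mulVec s = fun a => V a i)
    (β : ℝ) (hβ : β = enorm₂ (fun a => V a i - s a))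
    (α : ℝ) (hα : IsGreatest {x : ℝ | ∃ j : Fin n, p ≤ (j : ℕ) ∧ x = σ j / σ i} α)
    (PU : Matrix (Fin m) (Fin m) ℝ)
    (hPUsym : PUᵀ = PU) (hPUidem : PU * PU = PU)
    (hPUrange : Submodule.span ℝ (Set.range PUᵀ) =
      Submodule.span ℝ (Set.range (A * F ^ ℓ * K)ᵀ)) :
    enorm₂ (fun a => U a i - PU.mulVec (fun b => U b i) a) ≤
      α * β * |φ ⟨p, hp⟩ / φ i| ^ ℓ := by
  have hVVt : V * Vᵀ = 1 := mul_eq_one_comm.mp hV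
  have orth : ∀ j k : Fin n, (∑ a, V a j * V a k) = if j = k then (1:ℝ) else 0 := by
    intro j k
    have h0 := congrFun (congrFun hV j) k
    simpa [Matrix.mul_apply, Matrix.one_apply] using h0
  -- coordinates of the error vector
  set e : Fin n → ℝ := fun a => s a - V a i with hedef
  set c : Fin n → ℝ := fun j => ∑ a, V a j * e a with hcdef
  -- ⟨v_j, s⟩ = δ_{ji} for j < p
  have hVs : ∀ j : Fin n, (j : ℕ) < p → (∑ a, V a j * s a) = if j = i then (1:ℝ) else 0 := by
    intro j hj
    have h2 : (∑ a, V a j * P.mulVec s a) = ∑ a, V a j * V a i := by rw [hsproj]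
    rw [orth j i] at h2
    have h3 : ∀ a, P.mulVec s a
        = ∑ k ∈ Finset.univ.filter (fun k : Fin n => (k:ℕ) < p), V a k * (∑ b, V b k * s b) := by
      intro a
      rw [hP]
      simp only [Matrix.mulVec, dotProduct, Matrix.sum_apply, Matrix.vecMulVec_apply,
        Finset.sum_mul]
      rw [Finset.sum_comm]
      refine Finset.sum_congr rfl fun k _ => ?_
      rw [Finset.mul_sum]
      exact Finset.sum_congr rfl fun b _ => by ring
    have h4 : (∑ a, V a j * P.mulVec s a)
        = ∑ k ∈ Finset.univ.filter (fun k : Fin n => (k:ℕ) < p),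
            (∑ a, V a j * V a k) * (∑ b, V b k * s b) := by
      simp_rw [h3, Finset.mul_sum]
      rw [Finset.sum_comm]
      refine Finset.sum_congr rfl fun k _ => ?_
      rw [Finset.sum_comm]
      refine Finset.sum_congr rfl fun b _ => ?_
      rw [Finset.sum_mul]
      exact Finset.sum_congr rfl fun a _ => by ring
    rw [h4] at h2
    have h5 : ∀ k ∈ Finset.univ.filter (fun k : Fin n => (k:ℕ) < p),
        (∑ a, V a j * V a k) * (∑ b, V b k * s b)
          = if j = k then (∑ b, V b k * s b) else 0 := by
      intro k _
      rw [orth j k]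
      split <;> simp
    rw [Finset.sum_congr rfl h5, Finset.sum_ite_eq] at h2
    simp only [Finset.mem_filter, Finset.mem_univ, true_and, hj, if_true] at h2
    exact h2
  -- c vanishes on the first p coordinates
  have hc0 : ∀ j : Fin n, (j : ℕ) < p → c j = 0 := by
    intro j hj
    have h6 : c j = (∑ a, V a j * s a) - (∑ a, V a j * V a i) := by
      simp [hcdef, hedef, mul_sub, Finset.sum_sub_distrib]
    rw [h6, hVs j hj, orth j i]
    simp
  -- powers of F
  have hDpow : ∀ t : ℕ, F ^ t = V * (Matrix.diagonal φ) ^ t * Vᵀ := by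
    intro t
    induction t with
    | zero => simpa [pow_zero] using hVVt.symm
    | succ t ih =>
      rw [pow_succ, ih, hF]
      have h7 : V * Matrix.diagonal φ ^ t * Vᵀ * (V * Matrix.diagonal φ * Vᵀ)
          = V * Matrix.diagonal φ ^ t * ((Vᵀ * V) * (Matrix.diagonal φ * Vᵀ)) := by
        simp only [Matrix.mul_assoc]
      rw [h7, hV, Matrix.one_mul, pow_succ]
      simp only [Matrix.mul_assoc]
  have hAF : A * F ^ ℓ = U * Matrix.diagonal (fun j => σ j * φ j ^ ℓ) * Vᵀ := by
    have hdp : (Matrix.diagonal φ) ^ ℓ = Matrix.diagonal (fun j => φ j ^ ℓ) := by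
      rw [Matrix.diagonal_pow]; rfl
    rw [hA, hDpow ℓ, hdp]
    have h8 : U * Matrix.diagonal σ * Vᵀ * (V * Matrix.diagonal (fun j => φ j ^ ℓ) * Vᵀ)
        = U * Matrix.diagonal σ * ((Vᵀ * V) * (Matrix.diagonal (fun j => φ j ^ ℓ) * Vᵀ)) := by
      simp only [Matrix.mul_assoc]
    rw [h8, hV, Matrix.one_mul, ← Matrix.mul_assoc,
      Matrix.mul_assoc U (Matrix.diagonal σ) (Matrix.diagonal fun j => φ j ^ ℓ),
      Matrix.diagonal_mul_diagonal]
  -- scalar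
  have hne : σ i * φ i ^ ℓ ≠ 0 := mul_ne_zero (ne_of_gt (hσ i)) (pow_ne_zero _ (hφ0 i))
  set τ : ℝ := (σ i * φ i ^ ℓ)⁻¹ with hτdef
  set w : Fin m → ℝ := fun a => τ * ((A * F ^ ℓ).mulVec s a) with hwdef
  set d : Fin n → ℝ :=
    fun j => (if j = i then (1:ℝ) else 0) - τ * (σ j * φ j ^ ℓ) * (∑ a, V a j * s a) with hddef
  -- u - w = U d
  have huw : (fun a => U a i - w a) = U.mulVec d := by
    funext a
    have h1 : (A * F ^ ℓ).mulVec s a = ∑ j, U a j * (σ j * φ j ^ ℓ * (∑ b, V b j * s b)) := by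
      rw [hAF, ← Matrix.mulVec_mulVec, ← Matrix.mulVec_mulVec]
      have h9 : ∀ j, (Matrix.diagonal (fun j => σ j * φ j ^ ℓ) *ᵥ (Vᵀ *ᵥ s)) j
          = σ j * φ j ^ ℓ * (∑ b, V b j * s b) := by
        intro j
        rw [Matrix.mulVec_diagonal]
        congr 1
      show ∑ j, U a j * (Matrix.diagonal (fun j => σ j * φ j ^ ℓ) *ᵥ (Vᵀ *ᵥ s)) j = _
      exact Finset.sum_congr rfl fun j _ => by rw [h9 j]
    have h2 : U a i = ∑ j, U a j * (if j = i then (1:ℝ) else 0) := by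
      simp [mul_ite]
    show U a i - τ * ((A * F ^ ℓ).mulVec s a) = ∑ j, U a j * d j
    rw [h1, h2, Finset.mul_sum, ← Finset.sum_sub_distrib]
    exact Finset.sum_congr rfl fun j _ => by simp only [hddef]; ring
  -- bound on d
  obtain ⟨⟨j0, hj0p, hj0e⟩, hub⟩ := hα
  have hαnn : 0 ≤ α := hj0e ▸ div_nonneg (hσ j0).le (hσ i).le
  set C : ℝ := α * (|φ ⟨p, hp⟩| ^ ℓ / |φ i| ^ ℓ) with hCdef
  have hφipos : (0:ℝ) < |φ i| ^ ℓ := pow_pos (abs_pos.mpr (hφ0 i)) ℓ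
  have hCnn : 0 ≤ C := mul_nonneg hαnn (div_nonneg (pow_nonneg (abs_nonneg _) _) hφipos.le)
  have hdbound : ∀ j, |d j| ≤ C * |c j| := by
    intro j
    by_cases hjp : (j : ℕ) < p
    · have hd0 : d j = 0 := by
        rw [hddef]
        simp only
        rw [hVs j hjp]
        by_cases hji : j = i
        · subst hji
          simp only [if_true]
          rw [hτdef]
          field_simp
          rw [div_self hne, sub_self]
        · simp [hji]
      rw [hd0, abs_zero]
      exact mul_nonneg hCnn (abs_nonneg _)
    · push_neg at hjp
      have hji : j ≠ i := by
        intro hji; exact absurd (hji ▸ hi) (not_lt.mpr hjp)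
      have hVsc : (∑ a, V a j * s a) = c j := by
        have h6 : c j = (∑ a, V a j * s a) - (∑ a, V a j * V a i) := by
          simp [hcdef, hedef, mul_sub, Finset.sum_sub_distrib]
        rw [h6, orth j i, if_neg hji, sub_zero]
      have hdj : d j = -(τ * (σ j * φ j ^ ℓ) * c j) := by
        rw [hddef]; simp only [if_neg hji, hVsc]; ring
      have habs : |d j| = σ j * |φ j| ^ ℓ / (σ i * |φ i| ^ ℓ) * |c j| := by
        rw [hdj, abs_neg, abs_mul, abs_mul, hτdef, abs_inv, abs_mul, abs_mul,
          abs_pow, abs_pow, abs_of_pos (hσ i), abs_of_pos (hσ j)]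
        ring
      rw [habs]
      have a1 : σ j / σ i ≤ α := hub ⟨j, hjp, rfl⟩
      have a2 : |φ j| ^ ℓ ≤ |φ ⟨p, hp⟩| ^ ℓ :=
        pow_le_pow_left₀ (abs_nonneg _) (hφmono ⟨p, hp⟩ j (by exact hjp)) ℓ
      have key : σ j * |φ j| ^ ℓ / (σ i * |φ i| ^ ℓ) ≤ C := by
        have h5 : σ j / σ i * |φ j| ^ ℓ ≤ α * |φ ⟨p, hp⟩| ^ ℓ :=
          mul_le_mul a1 a2 (pow_nonneg (abs_nonneg _) _) hαnn
        calc σ j * |φ j| ^ ℓ / (σ i * |φ i| ^ ℓ)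
            = (σ j / σ i * |φ j| ^ ℓ) / |φ i| ^ ℓ := by
              field_simp
          _ ≤ (α * |φ ⟨p, hp⟩| ^ ℓ) / |φ i| ^ ℓ := by gcongr
          _ = C := by rw [hCdef]; ring
      exact mul_le_mul_of_nonneg_right key (abs_nonneg _)
  -- projection fixes w
  have hPUw : PU.mulVec w = w := by
    have hmem : (A * F ^ ℓ).mulVec s ∈ LinearMap.range (PU.mulVecLin) := by
      rw [Matrix.range_mulVecLin]
      change _ ∈ Submodule.span ℝ (Set.range PUᵀ)
      rw [hPUrange]
      change _ ∈ Submodule.span ℝ (Set.range (A * F ^ ℓ * K).col)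
      rw [← Matrix.range_mulVecLin]
      change s ∈ Submodule.span ℝ (Set.range K.col) at hsmem
      rw [← Matrix.range_mulVecLin] at hsmem
      obtain ⟨t0, ht0⟩ := hsmem
      refine ⟨t0, ?_⟩
      rw [Matrix.mulVecLin_apply] at ht0 ⊢
      rw [← Matrix.mulVec_mulVec, ht0]
    obtain ⟨y, hy⟩ := hmem
    rw [Matrix.mulVecLin_apply] at hy
    have h6 : PU.mulVec ((A * F ^ ℓ).mulVec s) = (A * F ^ ℓ).mulVec s := by
      rw [← hy, Matrix.mulVec_mulVec, hPUidem]
    have h7 : w = τ • ((A * F ^ ℓ).mulVec s) := rfl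
    rw [h7, Matrix.mulVec_smul, h6]
  -- Pythagoras
  set u : Fin m → ℝ := fun b => U b i with hudef
  have hPUr : PU.mulVec (fun a => u a - PU.mulVec u a) = 0 := by
    have h8 : (fun a => u a - PU.mulVec u a) = u - PU.mulVec u := rfl
    rw [h8, Matrix.mulVec_sub, Matrix.mulVec_mulVec, hPUidem, sub_self]
  have hpyth : enorm₂ (fun a => u a - PU.mulVec u a) ≤ enorm₂ (fun a => u a - w a) := by
    have hdot : (fun a => u a - PU.mulVec u a) ⬝ᵥ (PU.mulVec (u - w)) = 0 := by
      rw [Matrix.dotProduct_mulVec, ← Matrix.mulVec_transpose, hPUsym, hPUr]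
      exact zero_dotProduct _
    have heq : (fun a => u a - w a)
        = (fun a => (u a - PU.mulVec u a) + (PU.mulVec (u - w)) a) := by
      funext a
      have h9 : PU.mulVec (u - w) a = PU.mulVec u a - w a := by
        rw [Matrix.mulVec_sub, hPUw]
        rfl
      rw [h9]; ring
    rw [heq]
    exact enorm_pythag _ _ hdot
  -- norms of c and e
  have hceq : c = Vᵀ.mulVec e := by
    funext j
    simp [hcdef, Matrix.mulVec, dotProduct]
  have hVt : (Vᵀ)ᵀ * Vᵀ = 1 := by rw [Matrix.transpose_transpose]; exact hVVt
  have hcβ : enorm₂ c = β := by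
    rw [hceq, enorm_mulVec Vᵀ hVt e, hβ]
    unfold enorm₂
    congr 1
    refine Finset.sum_congr rfl fun a _ => ?_
    show (s a - V a i) ^ 2 = (V a i - s a) ^ 2
    ring
  -- final chain
  have hfinal : C * β = α * β * |φ ⟨p, hp⟩ / φ i| ^ ℓ := by
    rw [hCdef, abs_div, div_pow]; ring
  calc enorm₂ (fun a => U a i - PU.mulVec (fun b => U b i) a)
      = enorm₂ (fun a => u a - PU.mulVec u a) := rfl
    _ ≤ enorm₂ (fun a => u a - w a) := hpyth
    _ = enorm₂ (U.mulVec d) := by rw [← huw]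
    _ = enorm₂ d := enorm_mulVec U hU d
    _ ≤ C * enorm₂ c := enorm_le_mul hCnn hdbound
    _ = C * β := by rw [hcβ]
    _ = α * β * |φ ⟨p, hp⟩ / φ i| ^ ℓ := hfinal
end

section
/- Let φ_1, …, φ_n be nonzero reals with |φ_1| ≥ |φ_2| ≥ … ≥ |φ_n|, and let F := V diag(φ_1, …, φ_n) Vᵀ, so F v_i = φ_i v_i. Let p ≤ n, let K ∈ ℝ^{n×p}, let P := Σ_{i=1}^{p} v_i v_iᵀ, and assume rank(PK) = p. Fix i ≤ p and let s_i be the unique vector in the column space of K with P s_i = v_i; set β_i := ‖v_i − s_i‖₂. Let 𝒫_V be the orthogonal projection of ℝ^n onto the column space of F^ℓ K. Then ‖(I − 𝒫_V) v_i‖₂ ≤ β_i |φ_{p+1}/φ_i|^ℓ. -/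
open Matrix

noncomputable def enorm {k : ℕ} (x : Fin k → ℝ) : ℝ := Real.sqrt (∑ a, x a ^ 2)

lemma enorm_mulVec_s10 {k : ℕ} {V : Matrix (Fin k) (Fin k) ℝ} (hV : Vᵀ * V = 1)
    (x : Fin k → ℝ) : _root_.enorm (V *ᵥ x) = _root_.enorm x := by
  unfold _root_.enorm
  congr 1
  have h1 : ∀ (y : Fin k → ℝ), ∑ a, y a ^ 2 = y ⬝ᵥ y := fun y => by
    simp [dotProduct, sq]
  rw [h1, h1, dotProduct_mulVec, ← mulVec_transpose, mulVec_mulVec, hV, one_mulVec]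

lemma proj_opt {k : ℕ} (Q : Matrix (Fin k) (Fin k) ℝ) (hsym : Qᵀ = Q)
    (hid : Q * Q = Q) (v u : Fin k → ℝ) (hu : Q *ᵥ u = u) :
    _root_.enorm (fun a => v a - (Q *ᵥ v) a) ≤ _root_.enorm (fun a => v a - u a) := by
  set d : Fin k → ℝ := fun a => v a - (Q *ᵥ v) a with hd
  have hQd : Q *ᵥ d = 0 := by
    have hdef : d = v - Q *ᵥ v := rfl
    rw [hdef, mulVec_sub, mulVec_mulVec, hid, sub_self]
  set e : Fin k → ℝ := Q *ᵥ (v - u) with he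
  have hde : ∑ a, d a * e a = 0 := by
    have : d ⬝ᵥ e = 0 := by
      rw [he, dotProduct_mulVec, ← mulVec_transpose, hsym, hQd, zero_dotProduct]
    simpa [dotProduct] using this
  have hvue : ∀ a, v a - u a = d a + e a := by
    intro a
    have : e a = (Q *ᵥ v) a - u a := by
      rw [he, mulVec_sub, hu]; rfl
    simp only [hd, this]; ring
  unfold _root_.enorm
  apply Real.sqrt_le_sqrt
  have hexp : ∑ a, (v a - u a) ^ 2
      = ∑ a, d a ^ 2 + 2 * (∑ a, d a * e a) + ∑ a, e a ^ 2 := by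
    simp_rw [hvue]
    rw [Finset.mul_sum, ← Finset.sum_add_distrib, ← Finset.sum_add_distrib]
    apply Finset.sum_congr rfl
    intro a _
    ring
  rw [hexp, hde]
  have : 0 ≤ ∑ a, e a ^ 2 := Finset.sum_nonneg fun a _ => sq_nonneg _
  linarith

lemma my_conj_mul {k : ℕ} (V A B : Matrix (Fin k) (Fin k) ℝ) (hV : Vᵀ * V = 1) :
    (V * A * Vᵀ) * (V * B * Vᵀ) = V * (A * B) * Vᵀ := by
  have h : Vᵀ * (V * (B * Vᵀ)) = B * Vᵀ := by
    rw [← Matrix.mul_assoc, hV, Matrix.one_mul]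
  simp only [Matrix.mul_assoc, h]

set_option maxHeartbeats 1000000 in
/-- Error bound for the right singular vectors: with
`F = V diag(φ) Vᵀ` (so `F vᵢ = φᵢ vᵢ`), `|φ₁| ≥ … ≥ |φₙ|`, `rank(PK) = p`, `sᵢ`
the unique vector of the column space of `K` with `P sᵢ = vᵢ`,
`βᵢ = ‖vᵢ − sᵢ‖₂`, and `𝒫_V` the orthogonal projection onto the column space of
`Fˡ K`, one has `‖(I − 𝒫_V) vᵢ‖₂ ≤ βᵢ |φ_{p+1}/φᵢ|ˡ`. -/
theorem stmt_10 {n : ℕ}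
    (V : Matrix (Fin n) (Fin n) ℝ) (hV : Vᵀ * V = 1)
    (φ : Fin n → ℝ) (hφ0 : ∀ i, φ i ≠ 0)
    (hφmono : ∀ i j : Fin n, i ≤ j → |φ j| ≤ |φ i|)
    (F : Matrix (Fin n) (Fin n) ℝ) (hF : F = V * Matrix.diagonal φ * Vᵀ)
    (ℓ : ℕ) (hℓ : 0 < ℓ)
    (p : ℕ) (hp : p < n)
    (K : Matrix (Fin n) (Fin p) ℝ)
    (P : Matrix (Fin n) (Fin n) ℝ)
    (hP : P = ∑ i ∈ Finset.univ.filter fun i : Fin n => (i : ℕ) < p,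
      Matrix.vecMulVec (fun a => V a i) (fun a => V a i))
    (hrank : (P * K).rank = p)
    (i : Fin n) (hi : (i : ℕ) < p)
    (s : Fin n → ℝ)
    (hsmem : s ∈ Submodule.span ℝ (Set.range Kᵀ))
    (hsproj : P.mulVec s = fun a => V a i)
    (β : ℝ) (hβ : β = _root_.enorm (fun a => V a i - s a))
    (PV : Matrix (Fin n) (Fin n) ℝ)
    (hPVsym : PVᵀ = PV) (hPVidem : PV * PV = PV)
    (hPVrange : Submodule.span ℝ (Set.range PVᵀ) =
      Submodule.span ℝ (Set.range (F ^ ℓ * K)ᵀ)) :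
    _root_.enorm (fun a => V a i - PV.mulVec (fun b => V b i) a) ≤
      β * |φ ⟨p, hp⟩ / φ i| ^ ℓ := by
  have hVV : V * Vᵀ = 1 := mul_eq_one_comm.mp hV
  have horth : ∀ j j' : Fin n, (∑ a, V a j * V a j') = if j = j' then 1 else 0 := by
    intro j j'
    have h := congrFun (congrFun hV j) j'
    simpa [Matrix.mul_apply, Matrix.one_apply, Matrix.transpose_apply] using h
  set c : Fin n → ℝ := Vᵀ *ᵥ s with hc
  have hsV : V *ᵥ c = s := by rw [hc, mulVec_mulVec, hVV, one_mulVec]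
  have hcdef : ∀ j, c j = ∑ b, V b j * s b := by
    intro j; simp [hc, Matrix.mulVec, dotProduct, Matrix.transpose_apply]
  -- coordinates of s in the first p positions
  have key : ∀ j : Fin n, (if (j : ℕ) < p then c j else 0) = if j = i then 1 else 0 := by
    intro j
    have h1 : ∀ a, (P *ᵥ s) a
        = ∑ j' ∈ Finset.univ.filter (fun j' : Fin n => (j' : ℕ) < p), V a j' * c j' := by
      intro a
      rw [hP]
      simp only [Matrix.mulVec, dotProduct, Matrix.sum_apply, Matrix.vecMulVec_apply]
      simp_rw [Finset.sum_mul]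
      rw [Finset.sum_comm]
      apply Finset.sum_congr rfl
      intro j' _
      rw [hcdef, Finset.mul_sum]
      apply Finset.sum_congr rfl
      intro b _; ring
    have h2 : ∑ a, V a j * (P *ᵥ s) a = ∑ a, V a j * V a i := by
      apply Finset.sum_congr rfl
      intro a _
      rw [congrFun hsproj a]
    rw [horth] at h2
    simp_rw [h1, Finset.mul_sum] at h2
    rw [Finset.sum_comm] at h2
    have h3 : ∑ j' ∈ Finset.univ.filter (fun j' : Fin n => (j' : ℕ) < p),
        (if j = j' then c j' else 0) = if j = i then 1 else 0 := by
      rw [← h2]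
      apply Finset.sum_congr rfl
      intro j' _
      rw [show ∑ a, V a j * (V a j' * c j') = (∑ a, V a j * V a j') * c j' from by
        rw [Finset.sum_mul]; apply Finset.sum_congr rfl; intro a _; ring]
      rw [horth]
      split <;> simp
    rw [Finset.sum_ite_eq] at h3
    simpa using h3
  have hclt : ∀ j : Fin n, (j : ℕ) < p → c j = if j = i then 1 else 0 := by
    intro j hj
    have h := key j
    rwa [if_pos hj] at h
  -- powers of F
  have hFl : ∀ m : ℕ, F ^ m = V * Matrix.diagonal (fun j => φ j ^ m) * Vᵀ := by
    intro m
    induction m with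
    | zero => simp [hVV]
    | succ m ih =>
      rw [pow_succ, ih, hF, my_conj_mul _ _ _ hV, Matrix.diagonal_mul_diagonal]
      simp [pow_succ]
  have hFlv : ∀ w : Fin n → ℝ, (F ^ ℓ) *ᵥ (V *ᵥ w) = V *ᵥ (fun j => φ j ^ ℓ * w j) := by
    intro w
    have hd : (Matrix.diagonal fun j => φ j ^ ℓ) *ᵥ w = fun j => φ j ^ ℓ * w j := by
      funext j; rw [mulVec_diagonal]
    rw [hFl ℓ, mulVec_mulVec, Matrix.mul_assoc (V * Matrix.diagonal fun j => φ j ^ ℓ) Vᵀ V,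
      hV, Matrix.mul_one, ← mulVec_mulVec, hd]
  set g : Fin n → ℝ := fun j => (φ j ^ ℓ / φ i ^ ℓ) * c j with hg
  set u : Fin n → ℝ := V *ᵥ g with hu
  have hueq : u = (φ i ^ ℓ)⁻¹ • ((F ^ ℓ) *ᵥ s) := by
    have hgs : g = (φ i ^ ℓ)⁻¹ • fun j => φ j ^ ℓ * c j := by
      funext j
      simp only [hg, Pi.smul_apply, smul_eq_mul]
      field_simp
    rw [← hsV, hFlv, hu, hgs, mulVec_smul]
  -- u is fixed by PV
  have hPVu : PV *ᵥ u = u := by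
    obtain ⟨w, hw⟩ : ∃ w, K *ᵥ w = s := by
      have hm : s ∈ LinearMap.range (Matrix.mulVecLin K) := by
        rw [Matrix.range_mulVecLin]; exact hsmem
      obtain ⟨w, hw⟩ := hm
      exact ⟨w, hw⟩
    have humem : u ∈ LinearMap.range (Matrix.mulVecLin PV) := by
      rw [Matrix.range_mulVecLin, show Set.range PV.col = Set.range PVᵀ from rfl, hPVrange,
        show Set.range (F ^ ℓ * K)ᵀ = Set.range (F ^ ℓ * K).col from rfl, ← Matrix.range_mulVecLin]
      refine ⟨(φ i ^ ℓ)⁻¹ • w, ?_⟩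
      rw [Matrix.mulVecLin_apply, mulVec_smul, ← mulVec_mulVec, hw, hueq]
    obtain ⟨z, hz⟩ := humem
    rw [Matrix.mulVecLin_apply] at hz
    rw [← hz, mulVec_mulVec, hPVidem]
  -- expression of the vectors in coordinates
  have hvVe : (fun a => V a i) = V *ᵥ (fun j => if j = i then 1 else 0) := by
    funext a
    simp [Matrix.mulVec, dotProduct, mul_ite, mul_one, mul_zero]
  have hviu : (fun a => V a i - u a) = V *ᵥ (fun j => (if j = i then 1 else 0) - g j) := by
    funext a
    simp only [hu, Matrix.mulVec, dotProduct, mul_sub, Finset.sum_sub_distrib,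
      mul_ite, mul_one, mul_zero, Finset.sum_ite_eq', Finset.mem_univ, if_true]
  have hvic : (fun a => V a i - s a) = V *ᵥ (fun j => (if j = i then 1 else 0) - c j) := by
    funext a
    rw [← hsV]
    simp only [Matrix.mulVec, dotProduct, mul_sub, Finset.sum_sub_distrib,
      mul_ite, mul_one, mul_zero, Finset.sum_ite_eq', Finset.mem_univ, if_true]
  set q : ℝ := |φ ⟨p, hp⟩ / φ i| ^ ℓ with hqdef
  have hq0 : 0 ≤ q := pow_nonneg (abs_nonneg _) ℓ
  have hβ2 : β = _root_.enorm (fun j => (if j = i then 1 else 0) - c j) := by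
    rw [hβ, hvic, enorm_mulVec_s10 hV]
  -- termwise bound
  have hterm : ∀ j : Fin n,
      ((if j = i then 1 else 0) - g j) ^ 2 ≤ q ^ 2 * ((if j = i then 1 else 0) - c j) ^ 2 := by
    intro j
    by_cases hj : (j : ℕ) < p
    · have hcj := hclt j hj
      by_cases hji : j = i
      · subst hji
        have hne : φ j ^ ℓ ≠ 0 := pow_ne_zero _ (hφ0 j)
        simp [hg, hcj, div_self hne]
      · simp [hg, hcj, hji]
    · have hji : j ≠ i := by
        intro h; subst h; exact hj hi
      have hple : (⟨p, hp⟩ : Fin n) ≤ j := by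
        rw [Fin.le_def]
        exact le_of_not_gt hj
    
      have habs : |φ j / φ i| ≤ |φ ⟨p, hp⟩ / φ i| := by
        rw [abs_div, abs_div]
        apply div_le_div_of_nonneg_right
        · exact hφmono _ _ hple
        · exact (abs_pos.mpr (hφ0 i)).le
      have hpow : |φ j / φ i| ^ ℓ ≤ q := pow_le_pow_left₀ (abs_nonneg _) habs ℓ
      have hg2 : ((if j = i then 1 else 0) - g j) ^ 2 = ((φ j / φ i) ^ ℓ) ^ 2 * c j ^ 2 := by
        rw [if_neg hji, hg]
        rw [div_pow]
        ring
      have hc2 : ((if j = i then 1 else 0) - c j) ^ 2 = c j ^ 2 := by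
        rw [if_neg hji]; ring
      rw [hg2, hc2]
      have h1 : ((φ j / φ i) ^ ℓ) ^ 2 = (|φ j / φ i| ^ ℓ) ^ 2 := by
        rw [← abs_pow, sq_abs]
      rw [h1]
      have ht0 : 0 ≤ |φ j / φ i| ^ ℓ := pow_nonneg (abs_nonneg _) _
      have h2 : (|φ j / φ i| ^ ℓ) ^ 2 ≤ q ^ 2 := by
        apply pow_le_pow_left₀ ht0 hpow
      exact mul_le_mul_of_nonneg_right h2 (sq_nonneg _)
  calc _root_.enorm (fun a => V a i - (PV *ᵥ fun b => V b i) a)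
      ≤ _root_.enorm (fun a => V a i - u a) := proj_opt PV hPVsym hPVidem (fun b => V b i) u hPVu
    _ = _root_.enorm (fun j => (if j = i then 1 else 0) - g j) := by rw [hviu, enorm_mulVec_s10 hV]
    _ ≤ β * q := by
        rw [hβ2]
        unfold _root_.enorm
        rw [show Real.sqrt (∑ a, ((if a = i then 1 else 0) - c a) ^ 2) * q
            = Real.sqrt (q ^ 2 * ∑ a, ((if a = i then 1 else 0) - c a) ^ 2) from by
          rw [Real.sqrt_mul (sq_nonneg q), Real.sqrt_sq hq0]; ring]
        apply Real.sqrt_le_sqrt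
        rw [Finset.mul_sum]
        exact Finset.sum_le_sum fun j _ => hterm j
end
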